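/- arXiv:1708.02692 — 4 statements merged into one kernel-verified Lean document; each statement's English description precedes it below -/
import Mathlib

section
/- Suppose the vertex n has degree exactly k in the k-tree G(𝒯) (n is a leaf of G(𝒯)), and for 1 ≤ i ≤ n let T_kG_{n−1}^i be the subgraph of T_kG_n induced by the permutations p with p(n) = i. Then every vertex u of T_kG_{n−1}^i has exactly k neighbors outside T_kG_{n−1}^i, and these k outside neighbors lie in k pairwise distinct copies T_kG_{n−1}^j with j ≠ i. -/
/-- The transposition generating graph `G(𝒯)` of a set `T` of transpositions of `Sym(n)`:
vertices `{1,…,n}` (modeled as `Fin n`), with an edge `i j` iff the transposition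
`(i j)` belongs to `T`. -/
def transGraph {n : ℕ} (T : Set (Equiv.Perm (Fin n))) : SimpleGraph (Fin n) :=
  SimpleGraph.fromRel (fun i j => Equiv.swap i j ∈ T)

/-- The Cayley graph `Cay(Sym(n), T)`: vertices are permutations, and `g, h` are
adjacent iff `h = g * t` for some `t ∈ T`. -/
def cayley {n : ℕ} (T : Set (Equiv.Perm (Fin n))) : SimpleGraph (Equiv.Perm (Fin n)) :=
  SimpleGraph.fromRel (fun g h => ∃ t ∈ T, h = g * t)

/-- `G` is a `k`-tree: there is a construction ordering of the vertices in which the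
first `k+1` vertices are mutually adjacent, and each later vertex is joined to exactly
`k` mutually adjacent earlier vertices. -/
def IsKTree (k : ℕ) {V : Type*} [Fintype V] (G : SimpleGraph V) : Prop :=
  k + 1 ≤ Fintype.card V ∧
  ∃ e : Fin (Fintype.card V) ≃ V,
    (∀ i j : Fin (Fintype.card V), j < i → (i : ℕ) ≤ k → G.Adj (e i) (e j)) ∧
    ∀ i : Fin (Fintype.card V), k + 1 ≤ (i : ℕ) →
      {j : Fin (Fintype.card V) | j < i ∧ G.Adj (e i) (e j)}.ncard = k ∧
      {j : Fin (Fintype.card V) | j < i ∧ G.Adj (e i) (e j)}.Pairwise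
        (fun j₁ j₂ => G.Adj (e j₁) (e j₂))

/-- `F` is an `R_k`-vertex-cut of `G`: `G - F` is disconnected and every vertex of
`G - F` has at least `k` neighbors in `G - F`. -/
def IsRkCut {V : Type*} (G : SimpleGraph V) (k : ℕ) (F : Set V) : Prop :=
  ¬ (G.induce (Fᶜ : Set V)).Connected ∧
  ∀ v : V, v ∉ F → k ≤ {u : V | u ∉ F ∧ G.Adj v u}.ncard

/-- The `R_k`-vertex-connectivity `κ^k(G)`: the minimum cardinality of an
`R_k`-vertex-cut of `G`. -/


theorem stmt2_aux (n : ℕ) (T : Set (Equiv.Perm (Fin n)))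
    (hT : ∀ t ∈ T, Equiv.Perm.IsSwap t) (u : Equiv.Perm (Fin n)) (m : Fin n) :
    {v : Equiv.Perm (Fin n) | (cayley T).Adj u v ∧ v m ≠ u m}
      = (fun j => u * Equiv.swap m j) '' ((transGraph T).neighborSet m) := by
  ext v
  simp only [Set.mem_setOf_eq, Set.mem_image, SimpleGraph.mem_neighborSet,
    transGraph, cayley, SimpleGraph.fromRel_adj]
  constructor
  · rintro ⟨⟨hne, ht⟩, hvm⟩
    have hvt : ∃ t ∈ T, v = u * t := by
      rcases ht with ⟨t, htT, rfl⟩ | ⟨t, htT, hu⟩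
      · exact ⟨t, htT, rfl⟩
      · obtain ⟨a, b, hab, rfl⟩ := hT t htT
        refine ⟨_, htT, ?_⟩
        rw [hu, mul_assoc, Equiv.swap_mul_self, mul_one]
    obtain ⟨t, htT, rfl⟩ := hvt
    obtain ⟨a, b, hab, rfl⟩ := hT t htT
    have hm' : Equiv.swap a b m ≠ m := fun h => hvm (by simp [Equiv.Perm.mul_apply, h])
    have hswap : Equiv.swap a b = Equiv.swap m (Equiv.swap a b m) := by
      rcases eq_or_ne m a with rfl | ha
      · simp [Equiv.swap_apply_left]
      · rcases eq_or_ne m b with rfl | hb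
        · rw [Equiv.swap_apply_right, Equiv.swap_comm]
        · exact absurd (Equiv.swap_apply_of_ne_of_ne ha hb) hm'
    exact ⟨Equiv.swap a b m, ⟨Ne.symm hm', Or.inl (hswap ▸ htT)⟩, by rw [← hswap]⟩
  · rintro ⟨j, ⟨hmj, hTj⟩, rfl⟩
    have hTj' : Equiv.swap m j ∈ T := by
      rcases hTj with h | h
      · exact h
      · rwa [Equiv.swap_comm]
    refine ⟨⟨?_, Or.inl ⟨_, hTj', rfl⟩⟩, ?_⟩
    · intro h
      have := congrArg (fun p : Equiv.Perm (Fin n) => p m) h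
      simp [Equiv.Perm.mul_apply] at this
      exact hmj this
    · simp only [Equiv.Perm.mul_apply, Equiv.swap_apply_left]
      exact fun h => hmj ((u.injective h).symm)

theorem stmt2_inj (n : ℕ) (T : Set (Equiv.Perm (Fin n))) (u : Equiv.Perm (Fin n))
    (m : Fin n) :
    Set.InjOn (fun j => u * Equiv.swap m j) ((transGraph T).neighborSet m) := by
  intro j₁ _ j₂ _ h
  have := congrArg (fun p : Equiv.Perm (Fin n) => p m) h
  simpa [Equiv.Perm.mul_apply, u.injective.eq_iff] using this

noncomputable def rkConn {V : Type*} (G : SimpleGraph V) (k : ℕ) : ℕ :=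
  sInf {m : ℕ | ∃ F : Set V, IsRkCut G k F ∧ F.ncard = m}

/-- If the vertex `n` (the last vertex) is a leaf of the `k`-tree `G(𝒯)`, i.e. it has
degree exactly `k`, then every vertex `u` of the copy `T_kG_{n-1}^i` (permutations with
last value `i = u(n)`) has exactly `k` neighbors outside its copy, and these outside
neighbors lie in `k` pairwise distinct copies. -/
theorem stmt2 (n k : ℕ) (hn : 1 ≤ n)
    (T : Set (Equiv.Perm (Fin n))) (hT : ∀ t ∈ T, Equiv.Perm.IsSwap t)
    (hkt : IsKTree k (transGraph T))
    (hleaf : ((transGraph T).neighborSet ⟨n - 1, by omega⟩).ncard = k)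
    (u : Equiv.Perm (Fin n)) :
    {v : Equiv.Perm (Fin n) | (cayley T).Adj u v ∧
        v ⟨n - 1, by omega⟩ ≠ u ⟨n - 1, by omega⟩}.ncard = k ∧
    Set.InjOn (fun v : Equiv.Perm (Fin n) => v ⟨n - 1, by omega⟩)
      {v : Equiv.Perm (Fin n) | (cayley T).Adj u v ∧
        v ⟨n - 1, by omega⟩ ≠ u ⟨n - 1, by omega⟩} := by
  have key := stmt2_aux n T hT u ⟨n - 1, by omega⟩
  have hinj := stmt2_inj n T u (⟨n - 1, by omega⟩ : Fin n)
  constructor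
  · rw [key, Set.ncard_image_of_injOn hinj]
    exact hleaf
  · rw [key]
    rintro _ ⟨j₁, h₁, rfl⟩ _ ⟨j₂, h₂, rfl⟩ hv
    simp only [Equiv.Perm.mul_apply, Equiv.swap_apply_left, u.injective.eq_iff] at hv
    rw [hv]
end

section
/- For n ≥ k+1 ≥ 3, any two distinct vertices of the Cayley graph T_kG_n generated by a k-tree on n vertices have at most 3 common neighbors; in particular, T_kG_n contains no subgraph isomorphic to the complete bipartite graph K_{2,4}. -/
section helpers

variable {α : Type*} [DecidableEq α]

lemma isSwap_mul_self {s : Equiv.Perm α} (h : s.IsSwap) : s * s = 1 := by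
  obtain ⟨x, y, hxy, rfl⟩ := h
  exact Equiv.swap_mul_self x y

lemma swap_eq_of_apply_ne {s : Equiv.Perm α} (hs : s.IsSwap) {y : α} (h : s y ≠ y) :
    s = Equiv.swap y (s y) := by
  obtain ⟨u, v, huv, rfl⟩ := hs
  rcases (Equiv.swap_apply_ne_self_iff.1 h).2 with rfl | rfl
  · rw [Equiv.swap_apply_left]
  · rw [Equiv.swap_apply_right, Equiv.swap_comm]

lemma moved_of_mem {σ t : Equiv.Perm α} (hσ : σ ≠ 1) (h2 : (σ * t).IsSwap)
    {x y : α} (hxy : x ≠ y) (ht : t = Equiv.swap x y) : σ x ≠ x ∧ σ y ≠ y := by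
  have hsy : (σ * t) y = σ x := by rw [ht]; simp [Equiv.Perm.mul_apply]
  have hsx : (σ * t) x = σ y := by rw [ht]; simp [Equiv.Perm.mul_apply]
  constructor
  · intro hx
    have hne : (σ * t) y ≠ y := by rw [hsy, hx]; exact hxy
    have := swap_eq_of_apply_ne h2 hne
    rw [hsy, hx] at this
    apply hσ
    have : σ * t = t := by rw [this, ht, Equiv.swap_comm]
    have := congrArg (· * t⁻¹) this
    simpa [mul_assoc, ht, Equiv.swap_mul_self] using this
  · intro hy
    have hne : (σ * t) x ≠ x := by rw [hsx, hy]; exact hxy.symm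
    have := swap_eq_of_apply_ne h2 hne
    rw [hsx, hy] at this
    apply hσ
    have : σ * t = t := by rw [this, ht]
    have := congrArg (· * t⁻¹) this
    simpa [mul_assoc, ht, Equiv.swap_mul_self] using this

lemma shared_case {σ : Equiv.Perm α} {p q r : α} (hpq : p ≠ q) (hpr : p ≠ r) (hqr : q ≠ r)
    (hσ : σ = Equiv.swap p q * Equiv.swap p r) {t : Equiv.Perm α}
    (h1 : t.IsSwap) (h2 : (σ * t).IsSwap) :
    t = Equiv.swap p q ∨ t = Equiv.swap p r ∨ t = Equiv.swap q r := by
  have hσq : σ q = p := by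
    rw [hσ]
    simp [Equiv.Perm.mul_apply, Equiv.swap_apply_of_ne_of_ne hpq.symm hqr]
  have hσ1 : σ ≠ 1 := by
    intro h; rw [h] at hσq; exact hpq (by simpa using hσq.symm)
  obtain ⟨x, y, hxy, rfl⟩ := h1
  obtain ⟨hx, hy⟩ := moved_of_mem hσ1 h2 hxy rfl
  have hmem : ∀ z : α, σ z ≠ z → z = p ∨ z = q ∨ z = r := by
    intro z hz
    by_contra h; push_neg at h
    refine hz ?_
    rw [hσ]
    simp [Equiv.Perm.mul_apply, Equiv.swap_apply_of_ne_of_ne h.1 h.2.2,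
      Equiv.swap_apply_of_ne_of_ne h.1 h.2.1]
  rcases hmem x hx with rfl | rfl | rfl <;> rcases hmem y hy with rfl | rfl | rfl <;>
    first
      | exact absurd rfl hxy
      | exact Or.inl rfl
      | exact Or.inl (Equiv.swap_comm _ _)
      | exact Or.inr (Or.inl rfl)
      | exact Or.inr (Or.inl (Equiv.swap_comm _ _))
      | exact Or.inr (Or.inr rfl)
      | exact Or.inr (Or.inr (Equiv.swap_comm _ _))

lemma disjoint_case {σ : Equiv.Perm α} {a b c d : α}
    (hab : a ≠ b) (hcd : c ≠ d) (hac : a ≠ c) (had : a ≠ d) (hbc : b ≠ c) (hbd : b ≠ d)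
    (hσ : σ = Equiv.swap a b * Equiv.swap c d) {t : Equiv.Perm α}
    (h1 : t.IsSwap) (h2 : (σ * t).IsSwap) :
    t = Equiv.swap a b ∨ t = Equiv.swap c d := by
  have hσa : σ a = b := by
    rw [hσ]
    simp [Equiv.Perm.mul_apply, Equiv.swap_apply_of_ne_of_ne hac had]
  have hσ1 : σ ≠ 1 := by
    intro h; rw [h] at hσa; exact hab (by simpa using hσa)
  obtain ⟨x, y, hxy, rfl⟩ := h1
  obtain ⟨hx, hy⟩ := moved_of_mem hσ1 h2 hxy rfl
  have hmem : ∀ z : α, σ z ≠ z → z = a ∨ z = b ∨ z = c ∨ z = d := by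
    intro z hz
    by_contra h; push_neg at h
    refine hz ?_
    rw [hσ]
    simp [Equiv.Perm.mul_apply, Equiv.swap_apply_of_ne_of_ne h.2.2.1 h.2.2.2,
      Equiv.swap_apply_of_ne_of_ne h.1 h.2.1]
  rcases hmem x hx with h | h | h | h <;> rcases hmem y hy with h' | h' | h' | h' <;>
    rw [h, h'] at h2 ⊢ <;>
    first
      | exact absurd (h.trans h'.symm) hxy
      | exact Or.inl rfl
      | exact Or.inl (Equiv.swap_comm _ _)
      | exact Or.inr rfl
      | exact Or.inr (Equiv.swap_comm _ _)
      | (exfalso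
         have h3 := isSwap_mul_self h2
         have ha' := DFunLike.congr_fun h3 a
         have hb' := DFunLike.congr_fun h3 b
         simp [hσ, Equiv.Perm.mul_apply, Equiv.swap_apply_def, hab, hcd, hac, had, hbc, hbd,
           hab.symm, hcd.symm, hac.symm, had.symm, hbc.symm, hbd.symm] at ha' hb')

lemma key (σ : Equiv.Perm α) (hσ : σ ≠ 1) :
    {t : Equiv.Perm α | t.IsSwap ∧ (σ * t).IsSwap}.ncard ≤ 3 := by
  set S := {t : Equiv.Perm α | t.IsSwap ∧ (σ * t).IsSwap} with hSdef
  rcases S.eq_empty_or_nonempty with h | ⟨t₀, ht₀⟩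
  · simp [h]
  obtain ⟨ht₀s, hs₀s⟩ := ht₀
  obtain ⟨c, d, hcd, htcd⟩ := ht₀s
  obtain ⟨a, b, hab, hsab⟩ := hs₀s
  have hσeq : σ = Equiv.swap a b * Equiv.swap c d := by
    have h1 : σ * t₀ * t₀⁻¹ = Equiv.swap a b * t₀⁻¹ := by rw [hsab]
    rw [mul_inv_cancel_right] at h1
    rw [h1, htcd]
    simp
  have hsub3 : ∀ p q r : Equiv.Perm α, (∀ t ∈ S, t = p ∨ t = q ∨ t = r) → S.ncard ≤ 3 := by
    intro p q r h
    have hsub : S ⊆ {p, q, r} := by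
      intro t ht; rcases h t ht with rfl | rfl | rfl <;> simp
    have hfin : ({p, q, r} : Set (Equiv.Perm α)).Finite :=
      (((Set.finite_singleton r).insert q).insert p)
    calc S.ncard ≤ ({p, q, r} : Set (Equiv.Perm α)).ncard := Set.ncard_le_ncard hsub hfin
      _ ≤ ({q, r} : Set (Equiv.Perm α)).ncard + 1 := Set.ncard_insert_le _ _
      _ ≤ (({r} : Set (Equiv.Perm α)).ncard + 1) + 1 := by
          exact Nat.add_le_add_right (Set.ncard_insert_le _ _) 1
      _ = 3 := by rw [Set.ncard_singleton]
  rcases eq_or_ne a c with rfl | h1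
  · -- c = a
    rcases eq_or_ne b d with rfl | hbd
    · exact absurd (hσeq.trans (Equiv.swap_mul_self a b)) hσ
    · exact hsub3 _ _ _ fun t ht => shared_case hab hcd hbd hσeq ht.1 ht.2
  rcases eq_or_ne a d with rfl | h2
  · -- d = a
    rcases eq_or_ne b c with rfl | hbc
    · refine absurd ?_ hσ
      rw [hσeq, Equiv.swap_comm b a, Equiv.swap_mul_self]
    · have hσ' : σ = Equiv.swap a b * Equiv.swap a c := by rw [hσeq, Equiv.swap_comm c a]
      exact hsub3 _ _ _ fun t ht => shared_case hab hcd.symm hbc hσ' ht.1 ht.2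
  rcases eq_or_ne b c with rfl | h3
  · -- c = b
    have hσ' : σ = Equiv.swap b a * Equiv.swap b d := by rw [hσeq, Equiv.swap_comm a b]
    exact hsub3 _ _ _ fun t ht => shared_case hab.symm hcd h2 hσ' ht.1 ht.2
  rcases eq_or_ne b d with rfl | h4
  · -- d = b
    have hσ' : σ = Equiv.swap b a * Equiv.swap b c := by
      rw [hσeq, Equiv.swap_comm a b, Equiv.swap_comm c b]
    exact hsub3 _ _ _ fun t ht => shared_case hab.symm hcd.symm h1 hσ' ht.1 ht.2
  · exact hsub3 (Equiv.swap a b) (Equiv.swap c d) (Equiv.swap c d) fun t ht =>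
      (disjoint_case hab hcd h1 h2 h3 h4 hσeq ht.1 ht.2).imp id Or.inl

lemma cayley_adj' {n : ℕ} {T : Set (Equiv.Perm (Fin n))} (hT : ∀ t ∈ T, t.IsSwap)
    {u w : Equiv.Perm (Fin n)} (h : (cayley T).Adj u w) : ∃ t ∈ T, w = u * t := by
  rw [cayley, SimpleGraph.fromRel_adj] at h
  obtain ⟨hne, h | h⟩ := h
  · exact h
  · obtain ⟨t, htT, hw⟩ := h
    exact ⟨t, htT, by rw [hw, mul_assoc, isSwap_mul_self (hT t htT), mul_one]⟩

end helpers

/-- For `n ≥ k+1 ≥ 3`, any two distinct vertices of `T_kG_n` have at most `3` common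
neighbors; in particular `T_kG_n` contains no subgraph isomorphic to `K_{2,4}`. -/
theorem stmt6 (n k : ℕ) (hk : 2 ≤ k) (hkn : k + 1 ≤ n)
    (T : Set (Equiv.Perm (Fin n))) (hT : ∀ t ∈ T, Equiv.Perm.IsSwap t)
    (hkt : IsKTree k (transGraph T)) :
    (∀ u v : Equiv.Perm (Fin n), u ≠ v →
      ((cayley T).neighborSet u ∩ (cayley T).neighborSet v).ncard ≤ 3) ∧
    ¬ ∃ (a : Fin 2 → Equiv.Perm (Fin n)) (b : Fin 4 → Equiv.Perm (Fin n)),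
        Function.Injective a ∧ Function.Injective b ∧
        ∀ (i : Fin 2) (j : Fin 4), (cayley T).Adj (a i) (b j) := by
  have part1 : ∀ u v : Equiv.Perm (Fin n), u ≠ v →
      ((cayley T).neighborSet u ∩ (cayley T).neighborSet v).ncard ≤ 3 := by
    intro u v huv
    set σ := v⁻¹ * u with hσdef
    have hσ1 : σ ≠ 1 := by
      intro h
      exact huv (inv_mul_eq_one.mp h).symm
    have hsub : (cayley T).neighborSet u ∩ (cayley T).neighborSet v ⊆
        (fun t => u * t) '' {t : Equiv.Perm (Fin n) | t.IsSwap ∧ (σ * t).IsSwap} := by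
      intro w hw
      obtain ⟨hw1, hw2⟩ := hw
      obtain ⟨t, htT, rfl⟩ := cayley_adj' hT hw1
      obtain ⟨s, hsT, hws⟩ := cayley_adj' hT hw2
      refine ⟨t, ⟨hT t htT, ?_⟩, rfl⟩
      have hst : σ * t = s := by
        rw [hσdef, mul_assoc, hws, ← mul_assoc, inv_mul_cancel, one_mul]
      rw [hst]
      exact hT s hsT
    calc ((cayley T).neighborSet u ∩ (cayley T).neighborSet v).ncard
        ≤ ((fun t => u * t) '' {t : Equiv.Perm (Fin n) | t.IsSwap ∧ (σ * t).IsSwap}).ncard :=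
          Set.ncard_le_ncard hsub (Set.toFinite _)
      _ = {t : Equiv.Perm (Fin n) | t.IsSwap ∧ (σ * t).IsSwap}.ncard :=
          Set.ncard_image_of_injective _ (mul_right_injective u)
      _ ≤ 3 := key σ hσ1
  refine ⟨part1, ?_⟩
  rintro ⟨a, b, ha, hb, hadj⟩
  have h01 : a 0 ≠ a 1 := fun h => absurd (ha h) (by decide)
  have hsub : Set.range b ⊆ (cayley T).neighborSet (a 0) ∩ (cayley T).neighborSet (a 1) := by
    rintro w ⟨j, rfl⟩
    exact ⟨hadj 0 j, hadj 1 j⟩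
  have h4 : (Set.range b).ncard = 4 := by
    rw [← Set.image_univ, Set.ncard_image_of_injective _ hb, Set.ncard_univ]
    simp
  have hle := Set.ncard_le_ncard hsub (Set.toFinite _)
  have h3 := part1 (a 0) (a 1) h01
  omega
end

section
/- For n ≥ k+1 and k ≥ 2, the girth of the Cayley graph T_kG_n generated by a k-tree on n vertices equals 4; moreover, if s, p, t form a triangle in G(𝒯), then for every vertex u the four vertices u, u·(s p), u·(s p)·(p t), u·(s t) form a 4-cycle in T_kG_n (a Type B 4-cycle). -/
section Aux

variable {n : ℕ} {T : Set (Equiv.Perm (Fin n))}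

lemma transGraph_adj_mem {s p : Fin n} (h : (transGraph T).Adj s p) :
    s ≠ p ∧ Equiv.swap s p ∈ T := by
  rw [transGraph, SimpleGraph.fromRel_adj] at h
  refine ⟨h.1, ?_⟩
  rcases h.2 with h' | h'
  · exact h'
  · rwa [Equiv.swap_comm]

lemma cayley_adj_of (g : Equiv.Perm (Fin n)) {t : Equiv.Perm (Fin n)}
    (ht : t ∈ T) (h1 : t ≠ 1) : (cayley T).Adj g (g * t) := by
  rw [cayley, SimpleGraph.fromRel_adj]
  refine ⟨?_, Or.inl ⟨t, ht, rfl⟩⟩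
  intro h
  exact h1 (mul_left_cancel (a := g) (by simpa using h.symm))

lemma cayley_sign (hT : ∀ t ∈ T, Equiv.Perm.IsSwap t) {a b : Equiv.Perm (Fin n)}
    (w : (cayley T).Walk a b) :
    Equiv.Perm.sign b = (-1) ^ w.length * Equiv.Perm.sign a := by
  induction w with
  | nil => simp
  | @cons a c b h w ih =>
    have hc : Equiv.Perm.sign c = - Equiv.Perm.sign a := by
      rw [cayley, SimpleGraph.fromRel_adj] at h
      rcases h.2 with ⟨t, htT, rfl⟩ | ⟨t, htT, heq⟩
      · obtain ⟨x, y, hxy, rfl⟩ := hT t htT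
        simp [Equiv.Perm.sign_swap hxy]
      · obtain ⟨x, y, hxy, rfl⟩ := hT t htT
        rw [heq]
        simp [Equiv.Perm.sign_swap hxy]
    rw [SimpleGraph.Walk.length_cons, ih, hc, pow_succ]
    rw [mul_assoc, neg_one_mul]

lemma mul_ne_mul_of_apply_ne {n : ℕ} {x y : Equiv.Perm (Fin n)} (u : Equiv.Perm (Fin n))
    (z : Fin n) (h : x z ≠ y z) : u * x ≠ u * y := by
  intro he
  exact h (by rw [mul_left_cancel he])

lemma typeB' {n : ℕ} {T : Set (Equiv.Perm (Fin n))} {s p t : Fin n}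
    (hsp : (transGraph T).Adj s p) (hpt : (transGraph T).Adj p t)
    (hst : (transGraph T).Adj s t) (u : Equiv.Perm (Fin n)) :
    u ≠ u * Equiv.swap s p ∧
    u ≠ u * Equiv.swap s p * Equiv.swap p t ∧
    u ≠ u * Equiv.swap s t ∧
    u * Equiv.swap s p ≠ u * Equiv.swap s p * Equiv.swap p t ∧
    u * Equiv.swap s p ≠ u * Equiv.swap s t ∧
    u * Equiv.swap s p * Equiv.swap p t ≠ u * Equiv.swap s t ∧
    (cayley T).Adj u (u * Equiv.swap s p) ∧
    (cayley T).Adj (u * Equiv.swap s p) (u * Equiv.swap s p * Equiv.swap p t) ∧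
    (cayley T).Adj (u * Equiv.swap s p * Equiv.swap p t) (u * Equiv.swap s t) ∧
    (cayley T).Adj (u * Equiv.swap s t) u := by
  obtain ⟨hsp1, hsp2⟩ := transGraph_adj_mem hsp
  obtain ⟨hpt1, hpt2⟩ := transGraph_adj_mem hpt
  obtain ⟨hst1, hst2⟩ := transGraph_adj_mem hst
  have hps := hsp1.symm
  have htp := hpt1.symm
  have hts := hst1.symm
  set a := Equiv.swap s p with ha
  set b := Equiv.swap p t with hb
  set c := Equiv.swap s t with hc
  have ha1 : a ≠ 1 := by simp [ha, Equiv.swap_eq_one_iff, hsp1]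
  have hb1 : b ≠ 1 := by simp [hb, Equiv.swap_eq_one_iff, hpt1]
  have hc1 : c ≠ 1 := by simp [hc, Equiv.swap_eq_one_iff, hst1]
  have key : a * (b * a) = c := by
    rw [← mul_assoc, ha, hb, hc, Equiv.swap_comm s p, Equiv.swap_comm p t,
      Equiv.swap_mul_swap_mul_swap htp hts]
  have h01 : u ≠ u * a := by
    have := mul_ne_mul_of_apply_ne (x := 1) (y := a) u s
      (by simp [ha, Equiv.swap_apply_left, hsp1])
    simpa using this
  have h02 : u ≠ u * a * b := by
    have := mul_ne_mul_of_apply_ne (x := 1) (y := a * b) u s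
      (by simp [ha, hb, Equiv.Perm.mul_apply,
        Equiv.swap_apply_of_ne_of_ne hsp1 hst1, Equiv.swap_apply_left, hsp1])
    simpa [mul_assoc] using this
  have h03 : u ≠ u * c := by
    have := mul_ne_mul_of_apply_ne (x := 1) (y := c) u s
      (by simp [hc, Equiv.swap_apply_left, hst1])
    simpa using this
  have h12 : u * a ≠ u * a * b := by
    have := mul_ne_mul_of_apply_ne (x := a) (y := a * b) u p
      (by simp [ha, hb, Equiv.Perm.mul_apply, Equiv.swap_apply_right,
        Equiv.swap_apply_left, Equiv.swap_apply_of_ne_of_ne hts htp, hst1])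
    simpa [mul_assoc] using this
  have h13 : u * a ≠ u * c := by
    exact mul_ne_mul_of_apply_ne u t
      (by simp [ha, hc, Equiv.swap_apply_right,
        Equiv.swap_apply_of_ne_of_ne hts htp, hts])
  have h23 : u * a * b ≠ u * c := by
    have := mul_ne_mul_of_apply_ne (x := a * b) (y := c) u p
      (by simp [ha, hb, hc, Equiv.Perm.mul_apply, Equiv.swap_apply_left,
        Equiv.swap_apply_of_ne_of_ne hps hpt1,
        Equiv.swap_apply_of_ne_of_ne hts htp, htp])
    simpa [mul_assoc] using this
  refine ⟨h01, h02, h03, h12, h13, h23, ?_, ?_, ?_, ?_⟩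
  · exact cayley_adj_of u hsp2 ha1
  · exact cayley_adj_of (u * a) hpt2 hb1
  · have h := cayley_adj_of (u * a * b) hsp2 ha1
    have he : u * a * b * a = u * c := by rw [mul_assoc, mul_assoc, key]
    rwa [he] at h
  · have h := cayley_adj_of (u * c) hst2 hc1
    rwa [mul_assoc, Equiv.swap_mul_self, mul_one] at h

end Aux

/-- For `n ≥ k+1` and `k ≥ 2`, the girth of `T_kG_n` equals `4`; moreover, every
triangle `s p t` of `G(𝒯)` gives, for each vertex `u`, a (Type B) 4-cycle on the four
distinct vertices `u, u(sp), u(sp)(pt), u(st)`. -/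
theorem stmt12 (n k : ℕ) (hk : 2 ≤ k) (hkn : k + 1 ≤ n)
    (T : Set (Equiv.Perm (Fin n))) (hT : ∀ t ∈ T, Equiv.Perm.IsSwap t)
    (hkt : IsKTree k (transGraph T)) :
    (cayley T).girth = 4 ∧
    ∀ s p t : Fin n,
      (transGraph T).Adj s p → (transGraph T).Adj p t → (transGraph T).Adj s t →
      ∀ u : Equiv.Perm (Fin n),
        [u, u * Equiv.swap s p, u * Equiv.swap s p * Equiv.swap p t,
          u * Equiv.swap s t].Pairwise (· ≠ ·) ∧
        (cayley T).Adj u (u * Equiv.swap s p) ∧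
        (cayley T).Adj (u * Equiv.swap s p) (u * Equiv.swap s p * Equiv.swap p t) ∧
        (cayley T).Adj (u * Equiv.swap s p * Equiv.swap p t) (u * Equiv.swap s t) ∧
        (cayley T).Adj (u * Equiv.swap s t) u := by
  -- Extract a triangle from the k-tree
  obtain ⟨hcard, e, he1, _⟩ := hkt
  have hc3 : 3 ≤ Fintype.card (Fin n) := by
    rw [Fintype.card_fin]; omega
  let i0 : Fin (Fintype.card (Fin n)) := ⟨0, by omega⟩
  let i1 : Fin (Fintype.card (Fin n)) := ⟨1, by omega⟩
  let i2 : Fin (Fintype.card (Fin n)) := ⟨2, by omega⟩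
  have hA10 : (transGraph T).Adj (e i1) (e i0) :=
    he1 i1 i0 (by simp [i0, i1, Fin.lt_def]) (by simp [i1]; omega)
  have hA20 : (transGraph T).Adj (e i2) (e i0) :=
    he1 i2 i0 (by simp [i0, i2, Fin.lt_def]) (by simp [i2]; omega)
  have hA21 : (transGraph T).Adj (e i2) (e i1) :=
    he1 i2 i1 (by simp [i1, i2, Fin.lt_def]) (by simp [i2]; omega)
  -- the main type-B statement
  have main : ∀ s p t : Fin n,
      (transGraph T).Adj s p → (transGraph T).Adj p t → (transGraph T).Adj s t →
      ∀ u : Equiv.Perm (Fin n),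
        [u, u * Equiv.swap s p, u * Equiv.swap s p * Equiv.swap p t,
          u * Equiv.swap s t].Pairwise (· ≠ ·) ∧
        (cayley T).Adj u (u * Equiv.swap s p) ∧
        (cayley T).Adj (u * Equiv.swap s p) (u * Equiv.swap s p * Equiv.swap p t) ∧
        (cayley T).Adj (u * Equiv.swap s p * Equiv.swap p t) (u * Equiv.swap s t) ∧
        (cayley T).Adj (u * Equiv.swap s t) u := by
    intro s p t hsp hpt hst u
    obtain ⟨h01, h02, h03, h12, h13, h23, hA, hB, hC, hD⟩ := typeB' hsp hpt hst u
    refine ⟨?_, hA, hB, hC, hD⟩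
    simp [List.pairwise_cons, h01, h02, h03, h12, h13, h23]
  refine ⟨?_, main⟩
  -- build a 4-cycle at the identity
  obtain ⟨hpw, hA, hB, hC, hD⟩ := main (e i2) (e i1) (e i0) hA21 hA10 hA20 1
  obtain ⟨h01, h02, h03, h12, h13, h23, -⟩ := typeB' hA21 hA10 hA20 1
  set s := e i2
  set p := e i1
  set t := e i0
  have hsp_ne := (transGraph_adj_mem hA21).1
  have hpt_ne := (transGraph_adj_mem hA10).1
  have hst_ne := (transGraph_adj_mem hA20).1
  simp only [one_mul] at h01 h02 h03 h12 h13 h23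
  let w : (cayley T).Walk 1 1 :=
    .cons hA (.cons hB (.cons hC (.cons hD .nil)))
  have hlen : w.length = 4 := rfl
  have hcyc : w.IsCycle := by
    rw [SimpleGraph.Walk.isCycle_def]
    refine ⟨?_, by simp [w], ?_⟩
    · rw [SimpleGraph.Walk.isTrail_def]
      simp [w, Sym2.eq, Sym2.rel_iff', h01, h02, h03, h12, h13, h23,
        h01.symm, h02.symm, h03.symm, h12.symm, h13.symm, h23.symm,
        hsp_ne, hpt_ne, hst_ne, hsp_ne.symm, hpt_ne.symm, hst_ne.symm]
    · simp [w, h01.symm, h02.symm, h03.symm, h12, h13, h23,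
        hsp_ne, hpt_ne, hst_ne]
  -- girth computation
  have hub : (cayley T).egirth ≤ 4 := by
    have h1 : (cayley T).egirth ≤ (w.length : ℕ∞) := by
      rw [SimpleGraph.egirth]
      exact iInf_le_of_le 1 (iInf_le_of_le w (iInf_le_of_le hcyc le_rfl))
    rw [hlen] at h1
    exact_mod_cast h1
  have hlb : (4 : ℕ∞) ≤ (cayley T).egirth := by
    rw [SimpleGraph.le_egirth]
    intro a w' hw'
    have h3 := hw'.three_le_length
    have hsg := cayley_sign hT w'
    have hpow : ((-1 : ℤˣ)) ^ w'.length = 1 := by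
      have h' : (-1 : ℤˣ) ^ w'.length * Equiv.Perm.sign a = 1 * Equiv.Perm.sign a := by
        rw [one_mul, ← hsg]
      exact mul_right_cancel h'
    have heven : Even w'.length := by
      rcases Nat.even_or_odd w'.length with he | ho
      · exact he
      · exfalso
        rw [ho.neg_one_pow] at hpow
        exact absurd hpow (by decide)
    obtain ⟨r, hr⟩ := heven
    have h4 : 4 ≤ w'.length := by omega
    exact_mod_cast h4
  have hegirth : (cayley T).egirth = 4 := le_antisymm hub hlb
  rw [SimpleGraph.girth, hegirth]
  rfl
end

section
/- Let n ≥ 5 and 2 ≤ k ≤ n−1, let s, p, t form a triangle in the k-tree G(𝒯), and let C be the Type B 4-cycle with vertex set {u, u·(s p), u·(s p)·(p t), u·(s t)} for a vertex u of T_kG_n. Then the neighborhood F = N(C) of C (the set of vertices outside C adjacent to some vertex of C) has cardinality exactly 4(kn − k(k+1)/2) − 10, and F is an R_2-vertex-cut of T_kG_n. -/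
open Equiv Equiv.Perm

section
variable {α : Type*} [DecidableEq α]

lemma swap_ne_one' {x y : α} (h : x ≠ y) : Equiv.swap x y ≠ 1 := by
  simp [Equiv.swap_eq_one_iff, h]

lemma isSwap_eq_swap_of_moves {x : Perm α} (hx : x.IsSwap) {d : α} (hd : x d ≠ d) :
    x = Equiv.swap d (x d) := by
  obtain ⟨i, j, hij, rfl⟩ := hx
  rcases eq_or_ne d i with rfl | hdi
  · simp
  · rcases eq_or_ne d j with rfl | hdj
    · simp [Equiv.swap_apply_right, Equiv.swap_comm]
    · simp [Equiv.swap_apply_of_ne_of_ne hdi hdj] at hd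

lemma isSwap_mul_self_s13 {x : Perm α} (hx : x.IsSwap) : x * x = 1 := by
  obtain ⟨i, j, hij, rfl⟩ := hx; exact Equiv.swap_mul_self i j

lemma not_isSwap_of {z : Perm α} {d e : α} (hde : d ≠ e) (h1 : z d = e) (h2 : z e ≠ d) :
    ¬ z.IsSwap := by
  intro hz
  have := isSwap_eq_swap_of_moves hz (d := d) (by rw [h1]; exact hde.symm)
  rw [h1] at this
  apply h2
  rw [this, Equiv.swap_apply_right]

lemma swap_eq_swap_cases {a b c d : α} (hab : a ≠ b) (h : Equiv.swap a b = Equiv.swap c d) :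
    (a = c ∧ b = d) ∨ (a = d ∧ b = c) := by
  have hb : Equiv.swap c d a = b := by rw [← h, Equiv.swap_apply_left]
  rcases eq_or_ne a c with rfl | hac
  · left; refine ⟨rfl, ?_⟩; rw [Equiv.swap_apply_left] at hb; exact hb.symm
  · rcases eq_or_ne a d with rfl | had
    · right; refine ⟨rfl, ?_⟩; rw [Equiv.swap_apply_right] at hb; exact hb.symm
    · rw [Equiv.swap_apply_of_ne_of_ne hac had] at hb; exact absurd hb hab

lemma fix_of_factor {x y ρ : Perm α} (hx : x.IsSwap) (hy : y.IsSwap) (hρ : ρ ≠ 1)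
    (h : x * y = ρ) {d : α} (hd : ρ d = d) : x d = d ∧ y d = d := by
  by_cases hyd : y d = d
  · constructor
    · have : x (y d) = d := by rw [← h] at hd; simpa [Equiv.Perm.mul_apply] using hd
      rwa [hyd] at this
    · exact hyd
  · exfalso
    have hxyd : x (y d) = d := by rw [← h] at hd; simpa [Equiv.Perm.mul_apply] using hd
    have hy' : y = Equiv.swap d (y d) := isSwap_eq_swap_of_moves hy hyd
    have hx' : x = Equiv.swap (y d) d := by
      have : x (y d) ≠ y d := by rw [hxyd]; exact fun h' => hyd h'.symm
      have := isSwap_eq_swap_of_moves hx (d := y d) this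
      rwa [hxyd] at this
    have hxy : x = y := by rw [hx', Equiv.swap_comm]; exact hy'.symm
    rw [hxy, isSwap_mul_self_s13 hy] at h
    exact hρ h.symm

end

namespace St13
open Equiv Equiv.Perm

variable {α : Type*} [DecidableEq α]

def FactSet (T : Set (Perm α)) (σ : Perm α) : Set (Perm α) :=
  {x | x ∈ T ∧ ∃ y ∈ T, σ = x * y}

section structure_lemmas

variable {T : Set (Perm α)}

-- action of swap d e * swap e f
lemma triple_fix {d e f z : α} (hzd : z ≠ d) (hze : z ≠ e) (hzf : z ≠ f) :
    (Equiv.swap d e * Equiv.swap e f) z = z := by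
  rw [Equiv.Perm.mul_apply, Equiv.swap_apply_of_ne_of_ne hze hzf,
    Equiv.swap_apply_of_ne_of_ne hzd hze]

lemma triple_app_d {d e f : α} (hde : d ≠ e) (hdf : d ≠ f) :
    (Equiv.swap d e * Equiv.swap e f) d = e := by
  rw [Equiv.Perm.mul_apply, Equiv.swap_apply_of_ne_of_ne hde hdf, Equiv.swap_apply_left]

lemma triple_app_e {d e f : α} (hdf : d ≠ f) (hef : e ≠ f) :
    (Equiv.swap d e * Equiv.swap e f) e = f := by
  rw [Equiv.Perm.mul_apply, Equiv.swap_apply_left,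
    Equiv.swap_apply_of_ne_of_ne (Ne.symm hdf) (Ne.symm hef)]

lemma triple_app_f {d e f : α} (hef : e ≠ f) :
    (Equiv.swap d e * Equiv.swap e f) f = d := by
  rw [Equiv.Perm.mul_apply, Equiv.swap_apply_right, Equiv.swap_apply_right]

lemma triple_moves {d e f z : α} (hde : d ≠ e) (hef : e ≠ f) (hdf : d ≠ f)
    (hz : z = d ∨ z = e ∨ z = f) : (Equiv.swap d e * Equiv.swap e f) z ≠ z := by
  rcases hz with rfl | rfl | rfl
  · rw [triple_app_d hde hdf]; exact hde.symm
  · rw [triple_app_e hdf hef]; exact hef.symm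
  · rw [triple_app_f hef]; exact hdf

lemma triple_ne_one {d e f : α} (hde : d ≠ e) (hef : e ≠ f) (hdf : d ≠ f) :
    (Equiv.swap d e * Equiv.swap e f) ≠ 1 := by
  intro h
  have := triple_moves hde hef hdf (Or.inl rfl) (z := d)
  rw [h] at this; simp at this

-- membership of a swap on the triple in the triple swap set
lemma swap_mem_triple {d e f w1 w2 : α} (hde : d ≠ e) (hef : e ≠ f) (hdf : d ≠ f)
    (h12 : w1 ≠ w2) (h1 : w1 = d ∨ w1 = e ∨ w1 = f) (h2 : w2 = d ∨ w2 = e ∨ w2 = f) :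
    Equiv.swap w1 w2 ∈ ({Equiv.swap d e, Equiv.swap e f, Equiv.swap d f} : Set (Perm α)) := by
  rcases h1 with rfl | rfl | rfl <;> rcases h2 with rfl | rfl | rfl <;>
    simp_all [Equiv.swap_comm]

lemma factSubset_triple (hT : ∀ t ∈ T, t.IsSwap) {σ : Perm α} {d e f : α} (hde : d ≠ e) (hef : e ≠ f) (hdf : d ≠ f)
    (hσ : σ = Equiv.swap d e * Equiv.swap e f) :
    FactSet T σ ⊆ ({Equiv.swap d e, Equiv.swap e f, Equiv.swap d f} : Set (Perm α)) := by
  have hσ1 : σ ≠ 1 := hσ ▸ triple_ne_one hde hef hdf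
  rintro x ⟨hxT, y, hyT, hxy⟩
  obtain ⟨h, i, hhi, hx⟩ := hT x hxT
  have hfix : ∀ z, z ≠ d → z ≠ e → z ≠ f → x z = z := by
    intro z h1 h2 h3
    exact (fix_of_factor (hT x hxT) (hT y hyT) hσ1 hxy.symm (hσ ▸ triple_fix h1 h2 h3)).1
  have hmem : ∀ z, x z ≠ z → (z = d ∨ z = e ∨ z = f) := by
    intro z hz
    by_contra hc
    push_neg at hc
    exact hz (hfix z hc.1 hc.2.1 hc.2.2)
  have hh : h = d ∨ h = e ∨ h = f := hmem h (by rw [hx, Equiv.swap_apply_left]; exact hhi.symm)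
  have hi : i = d ∨ i = e ∨ i = f :=
    hmem i (by rw [hx, Equiv.swap_apply_right]; exact hhi)
  rw [hx]
  exact swap_mem_triple hde hef hdf hhi hh hi

-- action of disjoint product
lemma quad_fix {d e f g z : α} (h1 : z ≠ d) (h2 : z ≠ e) (h3 : z ≠ f) (h4 : z ≠ g) :
    (Equiv.swap d e * Equiv.swap f g) z = z := by
  rw [Equiv.Perm.mul_apply, Equiv.swap_apply_of_ne_of_ne h3 h4,
    Equiv.swap_apply_of_ne_of_ne h1 h2]

lemma mixed_contra {x y σ : Perm α} (hy : y.IsSwap) (hσ : σ = x * y)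
    {h h' i : α} (hx : x = Equiv.swap h i) (hσh : σ h = h') (hσh' : σ h' = h)
    (hh' : h ≠ h') (hh'i : h' ≠ i) (hih : i ≠ h) : False := by
  have hyx : y = x * σ := by
    rw [hσ, ← mul_assoc, hx, Equiv.swap_mul_self, one_mul]
  have hy1 : y h = h' := by
    rw [hyx, Equiv.Perm.mul_apply, hσh, hx, Equiv.swap_apply_of_ne_of_ne hh'.symm hh'i]
  have hy2 : y h' = i := by
    rw [hyx, Equiv.Perm.mul_apply, hσh', hx, Equiv.swap_apply_left]
  exact not_isSwap_of hh' hy1 (by rw [hy2]; exact hih) hy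

lemma factSubset_disjoint (hT : ∀ t ∈ T, t.IsSwap) {σ : Perm α} {d e f g : α}
    (hde : d ≠ e) (hfg : f ≠ g) (hdf : d ≠ f) (hdg : d ≠ g) (hef : e ≠ f) (heg : e ≠ g)
    (hσ : σ = Equiv.swap d e * Equiv.swap f g) :
    FactSet T σ ⊆ ({Equiv.swap d e, Equiv.swap f g} : Set (Perm α)) := by
  have hσd : σ d = e := by
    rw [hσ, Equiv.Perm.mul_apply, Equiv.swap_apply_of_ne_of_ne hdf hdg, Equiv.swap_apply_left]
  have hσe : σ e = d := by
    rw [hσ, Equiv.Perm.mul_apply, Equiv.swap_apply_of_ne_of_ne hef heg, Equiv.swap_apply_right]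
  have hσf : σ f = g := by
    rw [hσ, Equiv.Perm.mul_apply, Equiv.swap_apply_left,
      Equiv.swap_apply_of_ne_of_ne hdg.symm heg.symm]
  have hσg : σ g = f := by
    rw [hσ, Equiv.Perm.mul_apply, Equiv.swap_apply_right,
      Equiv.swap_apply_of_ne_of_ne hdf.symm hef.symm]
  have hσ1 : σ ≠ 1 := by
    intro h; rw [h] at hσd; simp at hσd; exact hde hσd
  rintro x ⟨hxT, y, hyT, hxy⟩
  obtain ⟨h, i, hhi, hx⟩ := hT x hxT
  have hfix : ∀ z, z ≠ d → z ≠ e → z ≠ f → z ≠ g → x z = z := by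
    intro z h1 h2 h3 h4
    exact (fix_of_factor (hT x hxT) (hT y hyT) hσ1 hxy.symm (hσ ▸ quad_fix h1 h2 h3 h4)).1
  have hmem : ∀ z, x z ≠ z → (z = d ∨ z = e ∨ z = f ∨ z = g) := by
    intro z hz
    by_contra hc
    push_neg at hc
    exact hz (hfix z hc.1 hc.2.1 hc.2.2.1 hc.2.2.2)
  have hh : h = d ∨ h = e ∨ h = f ∨ h = g :=
    hmem h (by rw [hx, Equiv.swap_apply_left]; exact hhi.symm)
  have hi : i = d ∨ i = e ∨ i = f ∨ i = g :=
    hmem i (by rw [hx, Equiv.swap_apply_right]; exact hhi)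
  have hys := hT y hyT
  rcases hh with rfl | rfl | rfl | rfl <;> rcases hi with rfl | rfl | rfl | rfl
  · exact absurd rfl hhi
  · left; rw [hx]
  · exact absurd (mixed_contra hys hxy hx hσd hσe hde hef hdf.symm) id
  · exact absurd (mixed_contra hys hxy hx hσd hσe hde heg hdg.symm) id
  · left; rw [hx]; exact Equiv.swap_comm _ _
  · exact absurd rfl hhi
  · exact absurd (mixed_contra hys hxy hx hσe hσd hde.symm hdf hef.symm) id
  · exact absurd (mixed_contra hys hxy hx hσe hσd hde.symm hdg heg.symm) id
  · exact absurd (mixed_contra hys hxy hx hσf hσg hfg hdg.symm hdf) id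
  · exact absurd (mixed_contra hys hxy hx hσf hσg hfg heg.symm hef) id
  · exact absurd rfl hhi
  · right; rw [hx]; rfl
  · exact absurd (mixed_contra hys hxy hx hσg hσf hfg.symm hdf.symm hdg) id
  · exact absurd (mixed_contra hys hxy hx hσg hσf hfg.symm hef.symm heg) id
  · right; rw [hx]; exact Set.mem_singleton_iff.2 (Equiv.swap_comm _ _)
  · exact absurd rfl hhi

lemma caseFact (hT : ∀ t ∈ T, t.IsSwap) {σ : Perm α} (hσ : σ ≠ 1)
    (hne : (FactSet T σ).Nonempty) :
    (∃ d e f : α, d ≠ e ∧ e ≠ f ∧ d ≠ f ∧ σ = Equiv.swap d e * Equiv.swap e f ∧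
      FactSet T σ ⊆ ({Equiv.swap d e, Equiv.swap e f, Equiv.swap d f} : Set (Perm α))) ∨
    (∃ x y : Perm α, FactSet T σ ⊆ ({x, y} : Set (Perm α))) := by
  obtain ⟨x0, hx0T, y0, hy0T, hσ0⟩ := hne
  obtain ⟨d, e, hde, hx0⟩ := hT x0 hx0T
  obtain ⟨f, g, hfg, hy0⟩ := hT y0 hy0T
  have hxy0 : x0 ≠ y0 := by
    intro h
    rw [hσ0, h, isSwap_mul_self_s13 (hT y0 hy0T)] at hσ
    exact hσ rfl
  by_cases hfe : f = e
  · rw [hfe] at hy0 hfg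
    have hdg : d ≠ g := by
      intro h; subst h
      exact hxy0 (by rw [hx0, hy0, Equiv.swap_comm])
    have h1 : σ = Equiv.swap d e * Equiv.swap e g := by rw [hσ0, hx0, hy0]
    exact Or.inl ⟨d, e, g, hde, hfg, hdg, h1, factSubset_triple hT hde hfg hdg h1⟩
  · by_cases hfd : f = d
    · rw [hfd] at hy0 hfg
      have heg : e ≠ g := by
        intro h; subst h
        exact hxy0 (by rw [hx0, hy0, Equiv.swap_comm])
      have h1 : σ = Equiv.swap e d * Equiv.swap d g := by
        rw [hσ0, hx0, hy0, Equiv.swap_comm]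
      exact Or.inl ⟨e, d, g, hde.symm, hfg, heg, h1,
        factSubset_triple hT hde.symm hfg heg h1⟩
    · by_cases hge : g = e
      · rw [hge] at hy0 hfg
        have h1 : σ = Equiv.swap d e * Equiv.swap e f := by
          rw [hσ0, hx0, hy0, Equiv.swap_comm f e]
        exact Or.inl ⟨d, e, f, hde, fun h => hfe h.symm, fun h => hfd h.symm, h1,
          factSubset_triple hT hde (fun h => hfe h.symm) (fun h => hfd h.symm) h1⟩
      · by_cases hgd : g = d
        · rw [hgd] at hy0 hfg
          have h1 : σ = Equiv.swap e d * Equiv.swap d f := by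
            rw [hσ0, hx0, hy0, Equiv.swap_comm d e, Equiv.swap_comm f d]
          exact Or.inl ⟨e, d, f, hde.symm, fun h => hfd h.symm, fun h => hfe h.symm, h1,
            factSubset_triple hT hde.symm (fun h => hfd h.symm) (fun h => hfe h.symm) h1⟩
        · refine Or.inr ⟨Equiv.swap d e, Equiv.swap f g, ?_⟩
          have h1 : σ = Equiv.swap d e * Equiv.swap f g := by rw [hσ0, hx0, hy0]
          exact factSubset_disjoint hT hde hfg (fun h => hfd h.symm) (fun h => hgd h.symm)
            (fun h => hfe h.symm) (fun h => hge h.symm) h1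

lemma swapFactor_triple {x y : Perm α} (hx : x.IsSwap) (hy : y.IsSwap) {d e f : α}
    (hde : d ≠ e) (hef : e ≠ f) (hdf : d ≠ f)
    (h : x * y = Equiv.swap d e * Equiv.swap e f) :
    x = Equiv.swap d e ∨ x = Equiv.swap e f ∨ x = Equiv.swap d f := by
  have hσ1 : (Equiv.swap d e * Equiv.swap e f : Perm α) ≠ 1 := triple_ne_one hde hef hdf
  obtain ⟨h1, i, hhi, hx'⟩ := id hx
  have hfix : ∀ z, z ≠ d → z ≠ e → z ≠ f → x z = z := by
    intro z hz1 hz2 hz3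
    exact (fix_of_factor hx hy hσ1 h (triple_fix hz1 hz2 hz3)).1
  have hmem : ∀ z, x z ≠ z → (z = d ∨ z = e ∨ z = f) := by
    intro z hz
    by_contra hc
    push_neg at hc
    exact hz (hfix z hc.1 hc.2.1 hc.2.2)
  have hh : h1 = d ∨ h1 = e ∨ h1 = f :=
    hmem h1 (by rw [hx', Equiv.swap_apply_left]; exact hhi.symm)
  have hi : i = d ∨ i = e ∨ i = f :=
    hmem i (by rw [hx', Equiv.swap_apply_right]; exact hhi)
  have := swap_mem_triple hde hef hdf hhi hh hi
  rw [← hx'] at this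
  simpa using this

section theta

variable {s p t : α}

lemma theta_id3 (hsp : s ≠ p) (hpt : p ≠ t) (hst : s ≠ t) : Equiv.swap s t * (Equiv.swap s p * Equiv.swap p t) = Equiv.swap s p := by
  apply Equiv.ext
  intro z
  simp only [Equiv.Perm.mul_apply, Equiv.swap_apply_def]
  split_ifs <;> simp_all

lemma factor_theta (hsp : s ≠ p) (hpt : p ≠ t) (hst : s ≠ t) {x y : Perm α} (hx : x.IsSwap) (hy : y.IsSwap)
    (h : x * y = Equiv.swap s p * Equiv.swap p t) :
    (x = Equiv.swap s p ∧ y = Equiv.swap p t) ∨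
    (x = Equiv.swap p t ∧ y = Equiv.swap s t) ∨
    (x = Equiv.swap s t ∧ y = Equiv.swap s p) := by
  have hy' : y = x * (Equiv.swap s p * Equiv.swap p t) := by
    rw [← h, ← mul_assoc, isSwap_mul_self_s13 hx, one_mul]
  rcases swapFactor_triple hx hy hsp hpt hst h with rfl | rfl | rfl
  · left
    refine ⟨rfl, ?_⟩
    rw [hy', ← mul_assoc, Equiv.swap_mul_self, one_mul]
  · right; left
    refine ⟨rfl, ?_⟩
    rw [hy', ← mul_assoc, Equiv.swap_mul_swap_mul_swap hsp hst, Equiv.swap_comm]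
  · right; right
    exact ⟨rfl, by rw [hy', theta_id3 hsp hpt hst]⟩

lemma four_in_three {s p t z1 z2 z3 z4 : α}
    (h12 : z1 ≠ z2) (h13 : z1 ≠ z3) (h14 : z1 ≠ z4) (h23 : z2 ≠ z3) (h24 : z2 ≠ z4)
    (h34 : z3 ≠ z4)
    (m1 : z1 = s ∨ z1 = p ∨ z1 = t) (m2 : z2 = s ∨ z2 = p ∨ z2 = t)
    (m3 : z3 = s ∨ z3 = p ∨ z3 = t) (m4 : z4 = s ∨ z4 = p ∨ z4 = t) : False := by
  rcases m1 with rfl | rfl | rfl <;> rcases m2 with rfl | rfl | rfl <;>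
    rcases m3 with rfl | rfl | rfl <;> rcases m4 with rfl | rfl | rfl <;> simp_all

lemma common_two {s p t : α} (hsp : s ≠ p) (hpt : p ≠ t) (hst : s ≠ t)
    {ρ : Perm α} {d1 e1 f1 d2 e2 f2 : α}
    (hde1 : d1 ≠ e1) (hef1 : e1 ≠ f1) (hdf1 : d1 ≠ f1)
    (hde2 : d2 ≠ e2) (hef2 : e2 ≠ f2) (hdf2 : d2 ≠ f2)
    (hρ : ρ = Equiv.swap d1 e1 * Equiv.swap e1 f1)
    (hρθ : ρ * (Equiv.swap s p * Equiv.swap p t) = Equiv.swap d2 e2 * Equiv.swap e2 f2) :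
    ∃ w1 w2 : α, w1 ≠ w2 ∧ (w1 = d1 ∨ w1 = e1 ∨ w1 = f1) ∧ (w1 = d2 ∨ w1 = e2 ∨ w1 = f2) ∧
      (w2 = d1 ∨ w2 = e1 ∨ w2 = f1) ∧ (w2 = d2 ∨ w2 = e2 ∨ w2 = f2) := by
  by_contra hno
  push_neg at hno
  set In1 : α → Prop := fun z => z = d1 ∨ z = e1 ∨ z = f1 with hIn1
  set In2 : α → Prop := fun z => z = d2 ∨ z = e2 ∨ z = f2 with hIn2
  have hno' : ∀ w1 w2, w1 ≠ w2 → In1 w1 → In2 w1 → In1 w2 → ¬ In2 w2 := by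
    intro w1 w2 hne a b c hd
    obtain ⟨q1, q2, q3⟩ := hno w1 w2 hne a b c
    rcases hd with h | h | h
    exacts [q1 h, q2 h, q3 h]
  -- θ moves points of S1 \ S2
  have hmove1 : ∀ z, In1 z → ¬ In2 z → (z = s ∨ z = p ∨ z = t) := by
    intro z h1 h2
    simp only [hIn2] at h2
    push_neg at h2
    have hfix2 : (ρ * (Equiv.swap s p * Equiv.swap p t)) z = z := by
      rw [hρθ]; exact triple_fix h2.1 h2.2.1 h2.2.2
    have hρz : ρ z ≠ z := by rw [hρ]; exact triple_moves hde1 hef1 hdf1 h1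
    by_contra hc
    push_neg at hc
    have hθz : (Equiv.swap s p * Equiv.swap p t) z = z := triple_fix hc.1 hc.2.1 hc.2.2
    rw [Equiv.Perm.mul_apply, hθz] at hfix2
    exact hρz hfix2
  -- θ moves points of S2 \ S1
  have hmove2 : ∀ z, In2 z → ¬ In1 z → (z = s ∨ z = p ∨ z = t) := by
    intro z h2 h1
    simp only [hIn1] at h1
    push_neg at h1
    have hρz : ρ z = z := by rw [hρ]; exact triple_fix h1.1 h1.2.1 h1.2.2
    have hmv : (ρ * (Equiv.swap s p * Equiv.swap p t)) z ≠ z := by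
      rw [hρθ]; exact triple_moves hde2 hef2 hdf2 h2
    by_contra hc
    push_neg at hc
    have hθz : (Equiv.swap s p * Equiv.swap p t) z = z := triple_fix hc.1 hc.2.1 hc.2.2
    rw [Equiv.Perm.mul_apply, hθz] at hmv
    exact hmv hρz
  -- find two elements of S1 not in S2
  have hS1 : ∃ z1 z2, z1 ≠ z2 ∧ In1 z1 ∧ In1 z2 ∧ ¬ In2 z1 ∧ ¬ In2 z2 := by
    by_cases hd : In2 d1
    · refine ⟨e1, f1, hef1, Or.inr (Or.inl rfl), Or.inr (Or.inr rfl), ?_, ?_⟩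
      · exact hno' d1 e1 hde1 (Or.inl rfl) hd (Or.inr (Or.inl rfl))
      · exact hno' d1 f1 hdf1 (Or.inl rfl) hd (Or.inr (Or.inr rfl))
    · by_cases he : In2 e1
      · refine ⟨d1, f1, hdf1, Or.inl rfl, Or.inr (Or.inr rfl), hd, ?_⟩
        exact hno' e1 f1 hef1 (Or.inr (Or.inl rfl)) he (Or.inr (Or.inr rfl))
      · exact ⟨d1, e1, hde1, Or.inl rfl, Or.inr (Or.inl rfl), hd, he⟩
  -- find two elements of S2 not in S1
  have hS2 : ∃ z1 z2, z1 ≠ z2 ∧ In2 z1 ∧ In2 z2 ∧ ¬ In1 z1 ∧ ¬ In1 z2 := by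
    by_cases hd : In1 d2
    · refine ⟨e2, f2, hef2, Or.inr (Or.inl rfl), Or.inr (Or.inr rfl), ?_, ?_⟩
      · intro he2; exact hno' d2 e2 hde2 hd (Or.inl rfl) he2 (Or.inr (Or.inl rfl))
      · intro hf2; exact hno' d2 f2 hdf2 hd (Or.inl rfl) hf2 (Or.inr (Or.inr rfl))
    · by_cases he : In1 e2
      · refine ⟨d2, f2, hdf2, Or.inl rfl, Or.inr (Or.inr rfl), hd, ?_⟩
        intro hf2; exact hno' e2 f2 hef2 he (Or.inr (Or.inl rfl)) hf2 (Or.inr (Or.inr rfl))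
      · exact ⟨d2, e2, hde2, Or.inl rfl, Or.inr (Or.inl rfl), hd, he⟩
  obtain ⟨z1, z2, hz12, hz1In, hz2In, hz1n, hz2n⟩ := hS1
  obtain ⟨y1, y2, hy12, hy1In, hy2In, hy1n, hy2n⟩ := hS2
  have hz1y1 : z1 ≠ y1 := fun h => hz1n (h ▸ hy1In)
  have hz1y2 : z1 ≠ y2 := fun h => hz1n (h ▸ hy2In)
  have hz2y1 : z2 ≠ y1 := fun h => hz2n (h ▸ hy1In)
  have hz2y2 : z2 ≠ y2 := fun h => hz2n (h ▸ hy2In)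
  exact four_in_three hz12 hz1y1 hz1y2 hz2y1 hz2y2 hy12
    (hmove1 z1 hz1In hz1n) (hmove1 z2 hz2In hz2n)
    (hmove2 y1 hy1In hy1n) (hmove2 y2 hy2In hy2n)

lemma ncard_le_two_of_subset_pair {β : Type*} {S : Set β} {x y : β}
    (h : S ⊆ ({x, y} : Set β)) : S.ncard ≤ 2 := by
  calc S.ncard ≤ ({x, y} : Set β).ncard :=
        Set.ncard_le_ncard h ((Set.finite_singleton y).insert x)
    _ ≤ ({y} : Set β).ncard + 1 := Set.ncard_insert_le _ _
    _ ≤ 2 := by rw [Set.ncard_singleton]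

lemma ncard_le_three_of_subset_triple {β : Type*} {S : Set β} {x y z : β}
    (h : S ⊆ ({x, y, z} : Set β)) : S.ncard ≤ 3 := by
  calc S.ncard ≤ ({x, y, z} : Set β).ncard :=
        Set.ncard_le_ncard h (((Set.finite_singleton z).insert y).insert x)
    _ ≤ ({y, z} : Set β).ncard + 1 := Set.ncard_insert_le _ _
    _ ≤ ({z} : Set β).ncard + 1 + 1 := by
        have := Set.ncard_insert_le y ({z} : Set β); omega
    _ ≤ 3 := by rw [Set.ncard_singleton]

lemma factset_finite (hT : ∀ t ∈ T, t.IsSwap) {σ : Perm α} (hσ : σ ≠ 1) :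
    (FactSet T σ).Finite := by
  rcases Set.eq_empty_or_nonempty (FactSet T σ) with h | h
  · simp [h]
  · rcases caseFact hT hσ h with ⟨d, e, f, _, _, _, _, hsub⟩ | ⟨x, y, hsub⟩
    · exact ((((Set.finite_singleton _).insert _).insert _)).subset hsub
    · exact (((Set.finite_singleton _).insert _)).subset hsub

lemma factset_ncard_le_three (hT : ∀ t ∈ T, t.IsSwap) {σ : Perm α} (hσ : σ ≠ 1) :
    (FactSet T σ).ncard ≤ 3 := by
  rcases Set.eq_empty_or_nonempty (FactSet T σ) with h | h
  · simp [h]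
  · rcases caseFact hT hσ h with ⟨d, e, f, _, _, _, _, hsub⟩ | ⟨x, y, hsub⟩
    · exact ncard_le_three_of_subset_triple hsub
    · exact le_trans (ncard_le_two_of_subset_pair hsub) (by omega)

lemma triple_swap_set_ncard {d e f : α} (hde : d ≠ e) (hef : e ≠ f) (hdf : d ≠ f) :
    ({Equiv.swap d e, Equiv.swap e f, Equiv.swap d f} : Set (Perm α)).ncard = 3 := by
  have h1 : Equiv.swap d e ≠ Equiv.swap e f := by
    intro h
    have := congrArg (fun σ : Perm α => σ d) h
    simp only [Equiv.swap_apply_left, Equiv.swap_apply_of_ne_of_ne hde hdf] at this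
    exact hde this.symm
  have h2 : Equiv.swap d e ≠ Equiv.swap d f := by
    intro h
    have := congrArg (fun σ : Perm α => σ e) h
    simp only [Equiv.swap_apply_right,
      Equiv.swap_apply_of_ne_of_ne hde.symm hef] at this
    exact hde this
  have h3 : Equiv.swap e f ≠ Equiv.swap d f := by
    intro h
    have := congrArg (fun σ : Perm α => σ e) h
    simp only [Equiv.swap_apply_left,
      Equiv.swap_apply_of_ne_of_ne hde.symm hef] at this
    exact hef this.symm
  rw [Set.ncard_insert_of_notMem (by simp [h1, h2]),
    Set.ncard_insert_of_notMem (by simp [h3]), Set.ncard_singleton]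

lemma mcl {s p t : α} (hT : ∀ t ∈ T, t.IsSwap) (hsp : s ≠ p) (hpt : p ≠ t) (hst : s ≠ t)
    {ρ : Perm α} (hρ : ρ ≠ 1) (hρθ : ρ * (Equiv.swap s p * Equiv.swap p t) ≠ 1) :
    (FactSet T ρ ∪ FactSet T (ρ * (Equiv.swap s p * Equiv.swap p t))).ncard ≤ 5 := by
  set θ : Perm α := Equiv.swap s p * Equiv.swap p t with hθ
  have hb1 : (FactSet T ρ).ncard ≤ 3 := factset_ncard_le_three hT hρ
  have hb2 : (FactSet T (ρ * θ)).ncard ≤ 3 := factset_ncard_le_three hT hρθ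
  have hfin1 : (FactSet T ρ).Finite := factset_finite hT hρ
  have hfin2 : (FactSet T (ρ * θ)).Finite := factset_finite hT hρθ
  have hunion := Set.ncard_union_add_ncard_inter (FactSet T ρ) (FactSet T (ρ * θ)) hfin1 hfin2
  rcases Set.eq_empty_or_nonempty (FactSet T ρ) with h1 | h1
  · rw [h1, Set.empty_union]; omega
  rcases Set.eq_empty_or_nonempty (FactSet T (ρ * θ)) with h2 | h2
  · rw [h2, Set.union_empty]; omega
  rcases caseFact hT hρ h1 with ⟨d1, e1, f1, hde1, hef1, hdf1, hρeq, hsub1⟩ | ⟨x, y, hsub⟩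
  · rcases caseFact hT hρθ h2 with ⟨d2, e2, f2, hde2, hef2, hdf2, hρθeq, hsub2⟩ | ⟨x, y, hsub⟩
    · by_cases hn1 : (FactSet T ρ).ncard ≤ 2
      · have := ncard_le_three_of_subset_triple hsub2; omega
      by_cases hn2 : (FactSet T (ρ * θ)).ncard ≤ 2
      · have := ncard_le_three_of_subset_triple hsub1; omega
      -- both have ncard exactly 3
      have he1 : FactSet T ρ =
          ({Equiv.swap d1 e1, Equiv.swap e1 f1, Equiv.swap d1 f1} : Set (Perm α)) :=
        Set.eq_of_subset_of_ncard_le hsub1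
          (by rw [triple_swap_set_ncard hde1 hef1 hdf1]; omega)
      have he2 : FactSet T (ρ * θ) =
          ({Equiv.swap d2 e2, Equiv.swap e2 f2, Equiv.swap d2 f2} : Set (Perm α)) :=
        Set.eq_of_subset_of_ncard_le hsub2
          (by rw [triple_swap_set_ncard hde2 hef2 hdf2]; omega)
      obtain ⟨w1, w2, hw12, hw11, hw12', hw21, hw22⟩ :=
        common_two hsp hpt hst hde1 hef1 hdf1 hde2 hef2 hdf2 hρeq hρθeq
      have hmem1 : Equiv.swap w1 w2 ∈ FactSet T ρ := by
        rw [he1]; exact swap_mem_triple hde1 hef1 hdf1 hw12 hw11 hw21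
      have hmem2 : Equiv.swap w1 w2 ∈ FactSet T (ρ * θ) := by
        rw [he2]; exact swap_mem_triple hde2 hef2 hdf2 hw12 hw12' hw22
      have hint : 0 < (FactSet T ρ ∩ FactSet T (ρ * θ)).ncard :=
        (Set.ncard_pos (hfin1.subset Set.inter_subset_left)).2 ⟨_, hmem1, hmem2⟩
      omega
    · have := ncard_le_two_of_subset_pair hsub; omega
  · have := ncard_le_two_of_subset_pair hsub; omega

end theta

end structure_lemmas

lemma isSwap_ne_one {x : Perm α} (hx : x.IsSwap) : x ≠ 1 := by
  obtain ⟨i, j, hij, rfl⟩ := hx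
  exact swap_ne_one' hij

lemma isSwap_inv {x : Perm α} (hx : x.IsSwap) : x⁻¹ = x :=
  inv_eq_of_mul_eq_one_right (isSwap_mul_self_s13 hx)

section identities

variable {s p t : α}

lemma idE2 (hsp : s ≠ p) (hpt : p ≠ t) (hst : s ≠ t) :
    Equiv.swap s p * Equiv.swap p t * Equiv.swap s t = Equiv.swap p t := by
  apply Equiv.ext; intro z
  simp only [Equiv.Perm.mul_apply, Equiv.swap_apply_def]
  split_ifs <;> simp_all

lemma idE3 (hsp : s ≠ p) (hpt : p ≠ t) (hst : s ≠ t) :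
    Equiv.swap s p * Equiv.swap p t * Equiv.swap s p = Equiv.swap s t := by
  apply Equiv.ext; intro z
  simp only [Equiv.Perm.mul_apply, Equiv.swap_apply_def]
  split_ifs <;> simp_all

lemma idE4 (hsp : s ≠ p) (hpt : p ≠ t) (hst : s ≠ t) :
    Equiv.swap s t * Equiv.swap p t = Equiv.swap s p * Equiv.swap s t := by
  apply Equiv.ext; intro z
  simp only [Equiv.Perm.mul_apply, Equiv.swap_apply_def]
  split_ifs <;> simp_all

lemma idE6 (hsp : s ≠ p) (hpt : p ≠ t) (hst : s ≠ t) :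
    Equiv.swap s t * Equiv.swap s p = Equiv.swap s p * Equiv.swap p t := by
  apply Equiv.ext; intro z
  simp only [Equiv.Perm.mul_apply, Equiv.swap_apply_def]
  split_ifs <;> simp_all

lemma idE8 (hsp : s ≠ p) (hpt : p ≠ t) (hst : s ≠ t) :
    Equiv.swap s t * (Equiv.swap s p * Equiv.swap s t) = Equiv.swap p t := by
  apply Equiv.ext; intro z
  simp only [Equiv.Perm.mul_apply, Equiv.swap_apply_def]
  split_ifs <;> simp_all

lemma theta_ne_swap_st (hsp : s ≠ p) (hpt : p ≠ t) (hst : s ≠ t) :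
    Equiv.swap s p * Equiv.swap p t ≠ Equiv.swap s t := by
  intro h
  have := congrArg (fun σ : Perm α => σ p) h
  simp only [Equiv.Perm.mul_apply, Equiv.swap_apply_left,
    Equiv.swap_apply_of_ne_of_ne (Ne.symm hst) (Ne.symm hpt),
    Equiv.swap_apply_of_ne_of_ne (Ne.symm hsp) hpt] at this
  exact hpt this.symm

lemma swap_trip_distinct {d e f : α} (hde : d ≠ e) (hef : e ≠ f) (hdf : d ≠ f) :
    Equiv.swap d e ≠ Equiv.swap e f ∧ Equiv.swap d e ≠ Equiv.swap d f ∧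
      Equiv.swap e f ≠ Equiv.swap d f := by
  refine ⟨?_, ?_, ?_⟩
  · intro h
    have := congrArg (fun σ : Perm α => σ d) h
    simp only [Equiv.swap_apply_left, Equiv.swap_apply_of_ne_of_ne hde hdf] at this
    exact hde this.symm
  · intro h
    have := congrArg (fun σ : Perm α => σ e) h
    simp only [Equiv.swap_apply_right,
      Equiv.swap_apply_of_ne_of_ne hde.symm hef] at this
    exact hde this
  · intro h
    have := congrArg (fun σ : Perm α => σ e) h
    simp only [Equiv.swap_apply_left,
      Equiv.swap_apply_of_ne_of_ne hde.symm hef] at this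
    exact hef this.symm

end identities

section cayleystuff

variable {n : ℕ} {T : Set (Equiv.Perm (Fin n))}

lemma mem_smul_iff {g w : Perm (Fin n)} :
    w ∈ (fun x => g * x) '' T ↔ g⁻¹ * w ∈ T := by
  constructor
  · rintro ⟨x, hx, rfl⟩
    simpa [inv_mul_cancel_left] using hx
  · intro h
    exact ⟨g⁻¹ * w, h, mul_inv_cancel_left g w⟩

lemma cay_adj (hT : ∀ t ∈ T, t.IsSwap) {g h : Perm (Fin n)} :
    (cayley T).Adj g h ↔ g⁻¹ * h ∈ T := by
  rw [cayley, SimpleGraph.fromRel_adj]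
  constructor
  · rintro ⟨hne, ⟨x, hxT, rfl⟩ | ⟨x, hxT, rfl⟩⟩
    · simpa [inv_mul_cancel_left] using hxT
    · have hinv : (h * x)⁻¹ * h = x⁻¹ := by group
      rw [hinv, isSwap_inv (hT x hxT)]
      exact hxT
  · intro hmem
    have hx := hT _ hmem
    refine ⟨?_, Or.inl ⟨g⁻¹ * h, hmem, (mul_inv_cancel_left g h).symm⟩⟩
    intro hgh
    exact isSwap_ne_one hx (by simp [hgh])

lemma sign_of_memN (hT : ∀ t ∈ T, t.IsSwap) {g w : Perm (Fin n)} (h : g⁻¹ * w ∈ T) :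
    Equiv.Perm.sign w = - Equiv.Perm.sign g := by
  obtain ⟨i, j, hij, hswap⟩ := hT _ h
  have h1 : Equiv.Perm.sign (g⁻¹ * w) = -1 := by
    rw [hswap]; exact Equiv.Perm.sign_swap hij
  have h2 : (Equiv.Perm.sign g)⁻¹ * Equiv.Perm.sign w = -1 := by
    rw [← map_inv, ← map_mul]; exact h1
  have h3 : Equiv.Perm.sign w = Equiv.Perm.sign g * ((Equiv.Perm.sign g)⁻¹ * Equiv.Perm.sign w) := by
    rw [mul_inv_cancel_left]
  rw [h3, h2]
  simp

end cayleystuff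

section main

variable {n : ℕ} {T : Set (Equiv.Perm (Fin n))} {s p t : Fin n} {u : Equiv.Perm (Fin n)}

def Cst (u : Perm (Fin n)) (s p t : Fin n) : Set (Perm (Fin n)) :=
  {u, u * Equiv.swap s p, u * Equiv.swap s p * Equiv.swap p t, u * Equiv.swap s t}

def Nbr (T : Set (Perm (Fin n))) (g : Perm (Fin n)) : Set (Perm (Fin n)) :=
  (fun x => g * x) '' T

lemma mem_Nbr {g w : Perm (Fin n)} : w ∈ Nbr T g ↔ g⁻¹ * w ∈ T := mem_smul_iff

lemma Nbr_ncard (g : Perm (Fin n)) : (Nbr T g).ncard = T.ncard :=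
  Set.ncard_image_of_injective T (mul_right_injective g)

lemma Nbr_finite (g : Perm (Fin n)) : (Nbr T g).Finite := Set.toFinite _

lemma adj_C_iff (hT : ∀ t ∈ T, t.IsSwap) {w : Perm (Fin n)} :
    (∃ x ∈ Cst u s p t, (cayley T).Adj x w) ↔
      w ∈ Nbr T u ∪ Nbr T (u * Equiv.swap s p) ∪
        Nbr T (u * Equiv.swap s p * Equiv.swap p t) ∪ Nbr T (u * Equiv.swap s t) := by
  constructor
  · rintro ⟨x, hx, hadj⟩
    rw [cay_adj hT] at hadj
    rcases hx with rfl | rfl | rfl | rfl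
    · exact Or.inl (Or.inl (Or.inl (mem_Nbr.2 hadj)))
    · exact Or.inl (Or.inl (Or.inr (mem_Nbr.2 hadj)))
    · exact Or.inl (Or.inr (mem_Nbr.2 hadj))
    · exact Or.inr (mem_Nbr.2 hadj)
  · rintro (((hw | hw) | hw) | hw)
    · exact ⟨u, Or.inl rfl, (cay_adj hT).2 (mem_Nbr.1 hw)⟩
    · exact ⟨_, Or.inr (Or.inl rfl), (cay_adj hT).2 (mem_Nbr.1 hw)⟩
    · exact ⟨_, Or.inr (Or.inr (Or.inl rfl)), (cay_adj hT).2 (mem_Nbr.1 hw)⟩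
    · exact ⟨_, Or.inr (Or.inr (Or.inr rfl)), (cay_adj hT).2 (mem_Nbr.1 hw)⟩

lemma Fset_eq (hT : ∀ t ∈ T, t.IsSwap) :
    {w : Perm (Fin n) | w ∉ Cst u s p t ∧ ∃ x ∈ Cst u s p t, (cayley T).Adj x w} =
      (Nbr T u ∪ Nbr T (u * Equiv.swap s p) ∪
        Nbr T (u * Equiv.swap s p * Equiv.swap p t) ∪ Nbr T (u * Equiv.swap s t)) \
        Cst u s p t := by
  ext w
  simp only [Set.mem_setOf_eq, Set.mem_diff]
  rw [adj_C_iff hT]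
  tauto

lemma N13_inter (hT : ∀ t ∈ T, t.IsSwap) (hsp : s ≠ p) (hpt : p ≠ t) (hst : s ≠ t)
    (haT : Equiv.swap s p ∈ T) (hbT : Equiv.swap p t ∈ T) (hcT : Equiv.swap s t ∈ T) :
    Nbr T u ∩ Nbr T (u * Equiv.swap s p * Equiv.swap p t) =
      ({u * Equiv.swap s p, u * Equiv.swap p t, u * Equiv.swap s t} : Set (Perm (Fin n))) := by
  ext w
  simp only [Set.mem_inter_iff, mem_Nbr, Set.mem_insert_iff, Set.mem_singleton_iff]
  constructor
  · rintro ⟨hx, hz⟩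
    have hy : (u⁻¹ * w)⁻¹ * (Equiv.swap s p * Equiv.swap p t) ∈ T := by
      have heq : (((u * Equiv.swap s p * Equiv.swap p t)⁻¹ * w))⁻¹ =
          (u⁻¹ * w)⁻¹ * (Equiv.swap s p * Equiv.swap p t) := by group
      rw [← heq, isSwap_inv (hT _ hz)]
      exact hz
    have hfac : (u⁻¹ * w) * ((u⁻¹ * w)⁻¹ * (Equiv.swap s p * Equiv.swap p t)) =
        Equiv.swap s p * Equiv.swap p t := by group
    rcases factor_theta hsp hpt hst (hT _ hx) (hT _ hy) hfac with ⟨h1, -⟩ | ⟨h1, -⟩ | ⟨h1, -⟩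
    · left; rw [← h1, mul_inv_cancel_left]
    · right; left; rw [← h1, mul_inv_cancel_left]
    · right; right; rw [← h1, mul_inv_cancel_left]
  · rintro (rfl | rfl | rfl)
    · refine ⟨by rw [inv_mul_cancel_left]; exact haT, ?_⟩
      have heq : (u * Equiv.swap s p * Equiv.swap p t)⁻¹ * (u * Equiv.swap s p) =
          (Equiv.swap p t)⁻¹ := by group
      rw [heq, Equiv.swap_inv]
      exact hbT
    · refine ⟨by rw [inv_mul_cancel_left]; exact hbT, ?_⟩
      have heq : (u * Equiv.swap s p * Equiv.swap p t)⁻¹ * (u * Equiv.swap p t) =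
          (Equiv.swap p t)⁻¹ * ((Equiv.swap s p)⁻¹ * Equiv.swap p t) := by group
      rw [heq, Equiv.swap_inv, Equiv.swap_inv, ← mul_assoc,
        Equiv.swap_mul_swap_mul_swap hsp hst, Equiv.swap_comm t s]
      exact hcT
    · refine ⟨by rw [inv_mul_cancel_left]; exact hcT, ?_⟩
      rw [← idE3 hsp hpt hst]
      have heq : (u * Equiv.swap s p * Equiv.swap p t)⁻¹ *
          (u * (Equiv.swap s p * Equiv.swap p t * Equiv.swap s p)) = Equiv.swap s p := by group
      rw [heq]
      exact haT

lemma N24_inter (hT : ∀ t ∈ T, t.IsSwap) (hsp : s ≠ p) (hpt : p ≠ t) (hst : s ≠ t)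
    (haT : Equiv.swap s p ∈ T) (hbT : Equiv.swap p t ∈ T) (hcT : Equiv.swap s t ∈ T) :
    Nbr T (u * Equiv.swap s p) ∩ Nbr T (u * Equiv.swap s t) =
      ({u, u * Equiv.swap s p * Equiv.swap p t, u * Equiv.swap s p * Equiv.swap s t} :
        Set (Perm (Fin n))) := by
  ext w
  simp only [Set.mem_inter_iff, mem_Nbr, Set.mem_insert_iff, Set.mem_singleton_iff]
  constructor
  · rintro ⟨hx, hz⟩
    have hy : ((u * Equiv.swap s p)⁻¹ * w)⁻¹ * (Equiv.swap p s * Equiv.swap s t) ∈ T := by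
      have heq : (((u * Equiv.swap s t)⁻¹ * w))⁻¹ =
          ((u * Equiv.swap s p)⁻¹ * w)⁻¹ * ((Equiv.swap s p)⁻¹ * Equiv.swap s t) := by group
      rw [Equiv.swap_inv] at heq
      rw [Equiv.swap_comm p s, ← heq, isSwap_inv (hT _ hz)]
      exact hz
    have hfac : ((u * Equiv.swap s p)⁻¹ * w) *
        (((u * Equiv.swap s p)⁻¹ * w)⁻¹ * (Equiv.swap p s * Equiv.swap s t)) =
        Equiv.swap p s * Equiv.swap s t := by group
    rcases factor_theta hsp.symm hst hpt (hT _ hx) (hT _ hy) hfac with ⟨h1, -⟩ | ⟨h1, -⟩ | ⟨h1, -⟩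
    · left
      have hw : w = (u * Equiv.swap s p) * Equiv.swap p s := by rw [← h1, mul_inv_cancel_left]
      rw [hw, Equiv.swap_comm p s, mul_assoc, Equiv.swap_mul_self, mul_one]
    · right; right; rw [← h1, mul_inv_cancel_left]
    · right; left; rw [← h1, mul_inv_cancel_left]
  · rintro (h | h | h)
    · constructor
      · have heq : (u * Equiv.swap s p)⁻¹ * u = (Equiv.swap s p)⁻¹ := by group
        rw [h, heq, Equiv.swap_inv]; exact haT
      · have heq : (u * Equiv.swap s t)⁻¹ * u = (Equiv.swap s t)⁻¹ := by group
        rw [h, heq, Equiv.swap_inv]; exact hcT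
    · constructor
      · have heq : (u * Equiv.swap s p)⁻¹ * (u * Equiv.swap s p * Equiv.swap p t) =
            Equiv.swap p t := by group
        rw [h, heq]; exact hbT
      · have heq : (u * Equiv.swap s t)⁻¹ * (u * Equiv.swap s p * Equiv.swap p t) =
            (Equiv.swap s t)⁻¹ * (Equiv.swap s p * Equiv.swap p t) := by group
        rw [h, heq, Equiv.swap_inv, theta_id3 hsp hpt hst]; exact haT
    · constructor
      · have heq : (u * Equiv.swap s p)⁻¹ * (u * Equiv.swap s p * Equiv.swap s t) =
            Equiv.swap s t := by group
        rw [h, heq]; exact hcT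
      · have heq : (u * Equiv.swap s t)⁻¹ * (u * Equiv.swap s p * Equiv.swap s t) =
            (Equiv.swap s t)⁻¹ * (Equiv.swap s p * Equiv.swap s t) := by group
        rw [h, heq, Equiv.swap_inv, idE8 hsp hpt hst]; exact hbT

lemma units_contra {x : ℤˣ} (h : x = -x) : False := by
  have h2 : x * 1 = x * (-1) := by
    rw [mul_one, mul_neg_one]; exact h
  have := mul_left_cancel h2
  exact absurd this (by decide)

lemma N13_24_disj (hT : ∀ t ∈ T, t.IsSwap) (hsp : s ≠ p) (hpt : p ≠ t) (hst : s ≠ t) :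
    (Nbr T u ∪ Nbr T (u * Equiv.swap s p * Equiv.swap p t)) ∩
      (Nbr T (u * Equiv.swap s p) ∪ Nbr T (u * Equiv.swap s t)) = ∅ := by
  rw [Set.eq_empty_iff_forall_notMem]
  rintro w ⟨h13, h24⟩
  have s13 : Equiv.Perm.sign w = - Equiv.Perm.sign u := by
    rcases h13 with hw | hw
    · exact sign_of_memN hT (mem_Nbr.1 hw)
    · have := sign_of_memN hT (mem_Nbr.1 hw)
      rw [map_mul, map_mul, Equiv.Perm.sign_swap hsp, Equiv.Perm.sign_swap hpt] at this
      simpa using this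
  have s24 : Equiv.Perm.sign w = Equiv.Perm.sign u := by
    rcases h24 with hw | hw
    · have := sign_of_memN hT (mem_Nbr.1 hw)
      rw [map_mul, Equiv.Perm.sign_swap hsp] at this
      simpa using this
    · have := sign_of_memN hT (mem_Nbr.1 hw)
      rw [map_mul, Equiv.Perm.sign_swap hst] at this
      simpa using this
  exact units_contra (s24.symm.trans s13)

lemma mul_ne_helper {g x y : Perm (Fin n)} (h : x ≠ y) : g * x ≠ g * y := by
  intro hh; exact h (mul_left_cancel hh)

lemma mul_ne_one_helper {g x : Perm (Fin n)} (h : x ≠ 1) : g ≠ g * x := by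
  intro hh; exact h (mul_left_cancel (a := g) (by rw [mul_one, ← hh])).symm

lemma C_ncard (hsp : s ≠ p) (hpt : p ≠ t) (hst : s ≠ t) : (Cst u s p t).ncard = 4 := by
  obtain ⟨hab, hac, hbc⟩ := swap_trip_distinct hsp hpt hst
  have h1 : u ≠ u * Equiv.swap s p := mul_ne_one_helper (swap_ne_one' hsp)
  have h2 : u ≠ u * Equiv.swap s p * Equiv.swap p t := by
    rw [mul_assoc]; exact mul_ne_one_helper (triple_ne_one hsp hpt hst)
  have h3 : u ≠ u * Equiv.swap s t := mul_ne_one_helper (swap_ne_one' hst)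
  have h4 : u * Equiv.swap s p ≠ u * Equiv.swap s p * Equiv.swap p t :=
    mul_ne_one_helper (swap_ne_one' hpt)
  have h5 : u * Equiv.swap s p ≠ u * Equiv.swap s t := mul_ne_helper hac
  have h6 : u * Equiv.swap s p * Equiv.swap p t ≠ u * Equiv.swap s t := by
    rw [mul_assoc]; exact mul_ne_helper (theta_ne_swap_st hsp hpt hst)
  rw [Cst, Set.ncard_insert_of_notMem (by simp [h1, h2, h3]),
    Set.ncard_insert_of_notMem (by simp [h4, h5]),
    Set.ncard_insert_of_notMem (by simp [h6]), Set.ncard_singleton]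

lemma C_subset (haT : Equiv.swap s p ∈ T) (hbT : Equiv.swap p t ∈ T)
    (hcT : Equiv.swap s t ∈ T) :
    Cst u s p t ⊆ Nbr T u ∪ Nbr T (u * Equiv.swap s p) ∪
      Nbr T (u * Equiv.swap s p * Equiv.swap p t) ∪ Nbr T (u * Equiv.swap s t) := by
  rintro w (h | h | h | h)
  · refine Or.inl (Or.inl (Or.inr ⟨Equiv.swap s p, haT, ?_⟩))
    show u * Equiv.swap s p * Equiv.swap s p = w
    rw [h, mul_assoc, Equiv.swap_mul_self, mul_one]
  · exact Or.inl (Or.inl (Or.inl ⟨Equiv.swap s p, haT, h.symm⟩))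
  · exact Or.inl (Or.inl (Or.inr ⟨Equiv.swap p t, hbT, h.symm⟩))
  · exact Or.inl (Or.inl (Or.inl ⟨Equiv.swap s t, hcT, h.symm⟩))

lemma F_ncard (hT : ∀ t ∈ T, t.IsSwap) (hsp : s ≠ p) (hpt : p ≠ t) (hst : s ≠ t)
    (haT : Equiv.swap s p ∈ T) (hbT : Equiv.swap p t ∈ T) (hcT : Equiv.swap s t ∈ T)
    (hm : 7 ≤ T.ncard) :
    {w : Perm (Fin n) | w ∉ Cst u s p t ∧ ∃ x ∈ Cst u s p t, (cayley T).Adj x w}.ncard =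
      4 * T.ncard - 10 := by
  obtain ⟨hab, hac, hbc⟩ := swap_trip_distinct hsp hpt hst
  rw [Fset_eq hT]
  have hre : Nbr T u ∪ Nbr T (u * Equiv.swap s p) ∪
      Nbr T (u * Equiv.swap s p * Equiv.swap p t) ∪ Nbr T (u * Equiv.swap s t) =
      (Nbr T u ∪ Nbr T (u * Equiv.swap s p * Equiv.swap p t)) ∪
        (Nbr T (u * Equiv.swap s p) ∪ Nbr T (u * Equiv.swap s t)) := by
    ext w
    simp only [Set.mem_union]
    tauto
  rw [hre]
  have i13 := Set.ncard_union_add_ncard_inter (Nbr T u)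
    (Nbr T (u * Equiv.swap s p * Equiv.swap p t)) (Nbr_finite _) (Nbr_finite _)
  have i24 := Set.ncard_union_add_ncard_inter (Nbr T (u * Equiv.swap s p))
    (Nbr T (u * Equiv.swap s t)) (Nbr_finite _) (Nbr_finite _)
  rw [N13_inter hT hsp hpt hst haT hbT hcT, Nbr_ncard, Nbr_ncard] at i13
  rw [N24_inter hT hsp hpt hst haT hbT hcT, Nbr_ncard, Nbr_ncard] at i24
  have c13 : ({u * Equiv.swap s p, u * Equiv.swap p t, u * Equiv.swap s t} :
      Set (Perm (Fin n))).ncard = 3 := by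
    rw [Set.ncard_insert_of_notMem
        (by simp [mul_ne_helper hab, mul_ne_helper hac]),
      Set.ncard_insert_of_notMem (by simp [mul_ne_helper hbc]), Set.ncard_singleton]
  have c24 : ({u, u * Equiv.swap s p * Equiv.swap p t,
      u * Equiv.swap s p * Equiv.swap s t} : Set (Perm (Fin n))).ncard = 3 := by
    have g1 : u ≠ u * Equiv.swap s p * Equiv.swap p t := by
      rw [mul_assoc]; exact mul_ne_one_helper (triple_ne_one hsp hpt hst)
    have g2 : u ≠ u * Equiv.swap s p * Equiv.swap s t := by
      rw [mul_assoc]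
      refine mul_ne_one_helper ?_
      intro hh
      have := congrArg (fun σ : Perm (Fin n) => σ t) hh
      simp only [Equiv.Perm.mul_apply, Equiv.swap_apply_right, Equiv.Perm.one_apply] at this
      rw [Equiv.swap_apply_left] at this
      exact hpt this
    have g3 : u * Equiv.swap s p * Equiv.swap p t ≠ u * Equiv.swap s p * Equiv.swap s t :=
      mul_ne_helper hbc
    rw [Set.ncard_insert_of_notMem (by simp [g1, g2]),
      Set.ncard_insert_of_notMem (by simp [g3]), Set.ncard_singleton]
  rw [c13] at i13
  rw [c24] at i24
  have hdisj := Set.ncard_union_eq (Set.disjoint_iff_inter_eq_empty.2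
    (N13_24_disj hT hsp hpt hst))
    ((Nbr_finite u).union (Nbr_finite _)) ((Nbr_finite _).union (Nbr_finite _))
  have hsub : Cst u s p t ⊆ (Nbr T u ∪ Nbr T (u * Equiv.swap s p * Equiv.swap p t)) ∪
      (Nbr T (u * Equiv.swap s p) ∪ Nbr T (u * Equiv.swap s t)) := by
    rw [← hre]; exact C_subset haT hbT hcT
  have hdiff := Set.ncard_diff hsub (Set.toFinite _)
  rw [C_ncard hsp hpt hst] at hdiff
  rw [hdiff, hdisj]
  omega

lemma ncard_setOf_eq_card_filter {β : Type*} [Fintype β] (P : β → Prop) [DecidablePred P] :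
    {x | P x}.ncard = (Finset.univ.filter P).card := by
  rw [Set.ncard_eq_toFinset_card', Set.toFinset_setOf]

lemma Tcard_of_ktree {n k : ℕ} {T : Set (Perm (Fin n))} (hT : ∀ t ∈ T, t.IsSwap)
    (hkt : IsKTree k (transGraph T)) :
    T.ncard = k * (k + 1) / 2 + (n - (k + 1)) * k := by
  classical
  set G := transGraph T with hG
  obtain ⟨hk1', e0, h10, h20⟩ := hkt
  have hcard : Fintype.card (Fin n) = n := Fintype.card_fin n
  have hk1 : k + 1 ≤ n := hcard ▸ hk1'
  set φ : Fin n ≃ Fin (Fintype.card (Fin n)) := finCongr hcard.symm with hφ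
  set e : Fin n → Fin n := fun i => e0 (φ i) with he
  have heinj : Function.Injective e := fun i j h => φ.injective (e0.injective h)
  have hesurj : Function.Surjective e := by
    intro y
    refine ⟨φ.symm (e0.symm y), ?_⟩
    show e0 (φ (φ.symm (e0.symm y))) = y
    rw [Equiv.apply_symm_apply, Equiv.apply_symm_apply]
  have hφval : ∀ i : Fin n, ((φ i) : ℕ) = (i : ℕ) := fun i => rfl
  have hφlt : ∀ i j : Fin n, φ j < φ i ↔ j < i := by
    intro i j
    simp only [Fin.lt_def, hφval]
  have h1 : ∀ i j : Fin n, j < i → (i : ℕ) ≤ k → G.Adj (e i) (e j) := by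
    intro i j hij hik
    exact h10 (φ i) (φ j) ((hφlt i j).2 hij) (by rw [hφval]; exact hik)
  have h2 : ∀ i : Fin n, k + 1 ≤ (i : ℕ) →
      {j : Fin n | j < i ∧ G.Adj (e i) (e j)}.ncard = k := by
    intro i hi
    have h := (h20 (φ i) (by rw [hφval]; exact hi)).1
    have himg : {j | j < φ i ∧ (transGraph T).Adj (e0 (φ i)) (e0 j)} =
        φ '' {j : Fin n | j < i ∧ G.Adj (e i) (e j)} := by
      ext j
      simp only [Set.mem_setOf_eq, Set.mem_image]
      constructor
      · intro hj
        refine ⟨φ.symm j, ⟨?_, ?_⟩, φ.apply_symm_apply j⟩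
        · have hlt := hj.1
          rw [← φ.apply_symm_apply j] at hlt
          exact (hφlt i (φ.symm j)).1 hlt
        · have hadj := hj.2
          rw [← φ.apply_symm_apply j] at hadj
          exact hadj
      · rintro ⟨j0, ⟨hj1, hj2⟩, rfl⟩
        exact ⟨(hφlt i j0).2 hj1, hj2⟩
    rw [himg, Set.ncard_image_of_injective _ φ.injective] at h
    exact h
  set Efin : Finset (Fin n × Fin n) :=
    Finset.univ.filter (fun q => q.2 < q.1 ∧ G.Adj (e q.1) (e q.2)) with hEfin
  have hadj_ne : ∀ {i j : Fin n}, G.Adj (e i) (e j) → e i ≠ e j := fun h => h.ne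
  have hadj_mem : ∀ {i j : Fin n}, G.Adj (e i) (e j) → Equiv.swap (e i) (e j) ∈ T := by
    intro i j h
    rw [hG, transGraph, SimpleGraph.fromRel_adj] at h
    rcases h.2 with h' | h'
    · exact h'
    · rwa [Equiv.swap_comm]
  -- step 1 : T.ncard = Efin.card
  have step1 : T.ncard = Efin.card := by
    rw [Set.ncard_eq_toFinset_card' T]
    refine (Finset.card_bij (fun q hq => Equiv.swap (e q.1) (e q.2)) ?_ ?_ ?_).symm
    · intro q hq
      rw [hEfin, Finset.mem_filter] at hq
      rw [Set.mem_toFinset]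
      exact hadj_mem hq.2.2
    · intro q1 hq1 q2 hq2 heq
      rw [hEfin, Finset.mem_filter] at hq1 hq2
      rcases swap_eq_swap_cases (hadj_ne hq1.2.2) heq with ⟨ha, hb⟩ | ⟨ha, hb⟩
      · have e1 : q1.1 = q2.1 := heinj ha
        have e2 : q1.2 = q2.2 := heinj hb
        exact Prod.ext e1 e2
      · have e1 : q1.1 = q2.2 := heinj ha
        have e2 : q1.2 = q2.1 := heinj hb
        exfalso
        have := hq1.2.1
        rw [e1, e2] at this
        exact absurd (lt_trans this hq2.2.1) (lt_irrefl _)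
    · intro x hx
      rw [Set.mem_toFinset] at hx
      obtain ⟨a, b, hab, rfl⟩ := hT x hx
      obtain ⟨ia, hia⟩ := hesurj a
      obtain ⟨ib, hib⟩ := hesurj b
      have hiab : ia ≠ ib := fun h => hab (by rw [← hia, ← hib, h])
      rcases lt_or_gt_of_ne hiab with hlt | hlt
      · refine ⟨(ib, ia), ?_, ?_⟩
        · rw [hEfin, Finset.mem_filter]
          refine ⟨Finset.mem_univ _, hlt, ?_⟩
          rw [hG, transGraph, SimpleGraph.fromRel_adj, hia, hib]
          exact ⟨fun h => hab h.symm, Or.inr hx⟩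
        · show Equiv.swap (e ib) (e ia) = Equiv.swap a b
          rw [hia, hib]
          exact Equiv.swap_comm b a
      · refine ⟨(ia, ib), ?_, ?_⟩
        · rw [hEfin, Finset.mem_filter]
          refine ⟨Finset.mem_univ _, hlt, ?_⟩
          rw [hG, transGraph, SimpleGraph.fromRel_adj, hia, hib]
          exact ⟨hab, Or.inl hx⟩
        · show Equiv.swap (e ia) (e ib) = Equiv.swap a b
          rw [hia, hib]
  -- step 2 : fiberwise count
  have step2 : Efin.card =
      ∑ i : Fin n, (Finset.univ.filter (fun j => j < i ∧ G.Adj (e i) (e j))).card := by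
    rw [Finset.card_eq_sum_card_fiberwise
      (f := Prod.fst) (t := Finset.univ) (fun x _ => Finset.mem_univ _)]
    refine Finset.sum_congr rfl ?_
    intro i _
    refine Finset.card_bij (fun q _ => q.2) ?_ ?_ ?_
    · intro q hq
      rw [Finset.mem_filter] at hq
      obtain ⟨hq1, hq2⟩ := hq
      rw [hEfin, Finset.mem_filter] at hq1
      rw [Finset.mem_filter]
      rw [hq2] at hq1
      exact ⟨Finset.mem_univ _, hq1.2⟩
    · intro q1 hq1 q2 hq2 heq
      rw [Finset.mem_filter] at hq1 hq2
      exact Prod.ext (hq1.2.trans hq2.2.symm) heq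
    · intro j hj
      rw [Finset.mem_filter] at hj
      refine ⟨(i, j), ?_, rfl⟩
      rw [Finset.mem_filter, hEfin, Finset.mem_filter]
      exact ⟨⟨Finset.mem_univ _, hj.2⟩, rfl⟩
  -- step 3 : row values
  have row_small : ∀ i : Fin n, (i : ℕ) ≤ k →
      (Finset.univ.filter (fun j => j < i ∧ G.Adj (e i) (e j))).card = (i : ℕ) := by
    intro i hi
    have : Finset.univ.filter (fun j => j < i ∧ G.Adj (e i) (e j)) =
        Finset.univ.filter (fun j => j < i) := by
      ext j
      simp only [Finset.mem_filter, Finset.mem_univ, true_and]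
      exact ⟨fun h => h.1, fun h => ⟨h, h1 i j h hi⟩⟩
    rw [this]
    have : Finset.univ.filter (fun j => j < i) = Finset.Iio i := by
      ext j; simp
    rw [this, Fin.card_Iio]
  have row_big : ∀ i : Fin n, k + 1 ≤ (i : ℕ) →
      (Finset.univ.filter (fun j => j < i ∧ G.Adj (e i) (e j))).card = k := by
    intro i hi
    have := h2 i hi
    rwa [ncard_setOf_eq_card_filter] at this
  -- step 4 : evaluate the sum
  have step4 : ∑ i : Fin n, (Finset.univ.filter (fun j => j < i ∧ G.Adj (e i) (e j))).card =
      k * (k + 1) / 2 + (n - (k + 1)) * k := by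
    have hval : ∀ i : Fin n,
        (Finset.univ.filter (fun j => j < i ∧ G.Adj (e i) (e j))).card =
          (fun m : ℕ => if m ≤ k then m else k) (i : ℕ) := by
      intro i
      by_cases hi : (i : ℕ) ≤ k
      · simp only [hi, if_true]
        exact row_small i hi
      · simp only [hi, if_false]
        exact row_big i (by omega)
    rw [Finset.sum_congr rfl (fun i _ => hval i),
      Fin.sum_univ_eq_sum_range (fun m => if m ≤ k then m else k) n]
    rw [Finset.range_eq_Ico, ← Finset.sum_Ico_consecutive _ (Nat.zero_le (k + 1)) hk1]
    have e1 : ∑ m ∈ Finset.Ico 0 (k + 1), (if m ≤ k then m else k) =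
        ∑ m ∈ Finset.range (k + 1), m := by
      rw [← Finset.range_eq_Ico]
      refine Finset.sum_congr rfl ?_
      intro m hm
      rw [Finset.mem_range] at hm
      simp [Nat.lt_succ_iff.1 hm]
    have e2 : ∑ m ∈ Finset.Ico (k + 1) n, (if m ≤ k then m else k) =
        (n - (k + 1)) * k := by
      rw [Finset.sum_congr rfl (g := fun _ => k) ?_, Finset.sum_const, Nat.card_Ico,
        smul_eq_mul]
      intro m hm
      rw [Finset.mem_Ico] at hm
      have : ¬ m ≤ k := by omega
      simp [this]
    rw [e1, e2, Finset.sum_range_id]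
    congr 1
    rw [Nat.add_sub_cancel, Nat.mul_comm]
  rw [step1, step2, step4]

lemma pair_subset_ncard {β : Type*} [Fintype β] {S : Set β} {w1 w2 : β} (h12 : w1 ≠ w2)
    (h1 : w1 ∈ S) (h2 : w2 ∈ S) : 2 ≤ S.ncard := by
  have hsub : ({w1, w2} : Set β) ⊆ S := by
    rintro x (rfl | rfl) <;> assumption
  calc 2 = ({w1, w2} : Set β).ncard := (Set.ncard_pair h12).symm
    _ ≤ S.ncard := Set.ncard_le_ncard hsub (Set.toFinite _)

lemma units_cases (x y : ℤˣ) : x = y ∨ x = -y := by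
  rcases Int.units_eq_one_or x with rfl | rfl <;>
    rcases Int.units_eq_one_or y with rfl | rfl <;> simp

lemma deg_ge_two (hT : ∀ t ∈ T, t.IsSwap) (hsp : s ≠ p) (hpt : p ≠ t) (hst : s ≠ t)
    (haT : Equiv.swap s p ∈ T) (hbT : Equiv.swap p t ∈ T) (hcT : Equiv.swap s t ∈ T)
    (hm : 7 ≤ T.ncard) (v : Perm (Fin n))
    (hvF : v ∉ {w : Perm (Fin n) | w ∉ Cst u s p t ∧ ∃ x ∈ Cst u s p t, (cayley T).Adj x w}) :
    2 ≤ {w : Perm (Fin n) |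
        w ∉ {w : Perm (Fin n) | w ∉ Cst u s p t ∧ ∃ x ∈ Cst u s p t, (cayley T).Adj x w} ∧
        (cayley T).Adj v w}.ncard := by
  classical
  set Fst : Set (Perm (Fin n)) :=
    {w : Perm (Fin n) | w ∉ Cst u s p t ∧ ∃ x ∈ Cst u s p t, (cayley T).Adj x w} with hFst
  have hCF : ∀ w, w ∈ Cst u s p t → w ∉ Fst := fun w hw hwF => hwF.1 hw
  have key : ∀ w1 w2 : Perm (Fin n), w1 ≠ w2 → w1 ∉ Fst → w2 ∉ Fst →
      (cayley T).Adj v w1 → (cayley T).Adj v w2 →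
      2 ≤ {w : Perm (Fin n) | w ∉ Fst ∧ (cayley T).Adj v w}.ncard := by
    intro w1 w2 h12 hw1 hw2 ha1 ha2
    exact pair_subset_ncard h12 ⟨hw1, ha1⟩ ⟨hw2, ha2⟩
  by_cases hvC : v ∈ Cst u s p t
  · -- v is on the cycle
    rcases hvC with hv | hv | hv | hv
    · refine key (u * Equiv.swap s p) (u * Equiv.swap s t)
        (mul_ne_helper (swap_trip_distinct hsp hpt hst).2.1)
        (hCF _ (Or.inr (Or.inl rfl))) (hCF _ (Or.inr (Or.inr (Or.inr rfl)))) ?_ ?_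
      · rw [cay_adj hT, hv, inv_mul_cancel_left]; exact haT
      · rw [cay_adj hT, hv, inv_mul_cancel_left]; exact hcT
    · have hne : u ≠ u * Equiv.swap s p * Equiv.swap p t := by
        rw [mul_assoc]; exact mul_ne_one_helper (triple_ne_one hsp hpt hst)
      refine key u (u * Equiv.swap s p * Equiv.swap p t) hne
        (hCF _ (Or.inl rfl)) (hCF _ (Or.inr (Or.inr (Or.inl rfl)))) ?_ ?_
      · rw [cay_adj hT, hv]
        have heq : (u * Equiv.swap s p)⁻¹ * u = (Equiv.swap s p)⁻¹ := by group
        rw [heq, Equiv.swap_inv]; exact haT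
      · rw [cay_adj hT, hv]
        have heq : (u * Equiv.swap s p)⁻¹ * (u * Equiv.swap s p * Equiv.swap p t) =
            Equiv.swap p t := by group
        rw [heq]; exact hbT
    · refine key (u * Equiv.swap s p) (u * Equiv.swap s t)
        (mul_ne_helper (swap_trip_distinct hsp hpt hst).2.1)
        (hCF _ (Or.inr (Or.inl rfl))) (hCF _ (Or.inr (Or.inr (Or.inr rfl)))) ?_ ?_
      · rw [cay_adj hT, hv]
        have heq : (u * Equiv.swap s p * Equiv.swap p t)⁻¹ * (u * Equiv.swap s p) =
            (Equiv.swap p t)⁻¹ := by group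
        rw [heq, Equiv.swap_inv]; exact hbT
      · rw [cay_adj hT, hv, ← idE3 hsp hpt hst]
        have heq : (u * Equiv.swap s p * Equiv.swap p t)⁻¹ *
            (u * (Equiv.swap s p * Equiv.swap p t * Equiv.swap s p)) = Equiv.swap s p := by
          group
        rw [heq]; exact haT
    · have hne : u ≠ u * Equiv.swap s p * Equiv.swap p t := by
        rw [mul_assoc]; exact mul_ne_one_helper (triple_ne_one hsp hpt hst)
      refine key u (u * Equiv.swap s p * Equiv.swap p t) hne
        (hCF _ (Or.inl rfl)) (hCF _ (Or.inr (Or.inr (Or.inl rfl)))) ?_ ?_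
      · rw [cay_adj hT, hv]
        have heq : (u * Equiv.swap s t)⁻¹ * u = (Equiv.swap s t)⁻¹ := by group
        rw [heq, Equiv.swap_inv]; exact hcT
      · rw [cay_adj hT, hv]
        have heq : (u * Equiv.swap s t)⁻¹ * (u * Equiv.swap s p * Equiv.swap p t) =
            (Equiv.swap s t)⁻¹ * (Equiv.swap s p * Equiv.swap p t) := by group
        rw [heq, Equiv.swap_inv, theta_id3 hsp hpt hst]; exact haT
  · -- v is outside C ∪ F
    have hvCn : ∀ g, v ≠ g → g ∈ Cst u s p t → True := fun _ _ _ => trivial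
    have hvu : v ≠ u := fun h => hvC (h ▸ Or.inl rfl)
    have hva : v ≠ u * Equiv.swap s p := fun h => hvC (h ▸ Or.inr (Or.inl rfl))
    have hvab : v ≠ u * Equiv.swap s p * Equiv.swap p t :=
      fun h => hvC (h ▸ Or.inr (Or.inr (Or.inl rfl)))
    have hvc : v ≠ u * Equiv.swap s t := fun h => hvC (h ▸ Or.inr (Or.inr (Or.inr rfl)))
    set B : Set (Perm (Fin n)) := {x | x ∈ T ∧ v * x ∈ Fst} with hB
    have hBsub5 : B.ncard ≤ 5 := by
      rcases units_cases (Equiv.Perm.sign v) (Equiv.Perm.sign u) with hsv | hsv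
      · -- same sign as u : neighbours in F lie in N1 ∪ N3
        have hsub : B ⊆ FactSet T (v⁻¹ * u) ∪
            FactSet T ((v⁻¹ * u) * (Equiv.swap s p * Equiv.swap p t)) := by
          rintro x ⟨hxT, hxF⟩
          rw [hFst, Fset_eq hT] at hxF
          have hxU := hxF.1
          have hsx : Equiv.Perm.sign (v * x) = - Equiv.Perm.sign u := by
            obtain ⟨i, j, hij, hxs⟩ := hT x hxT
            rw [map_mul, hxs, Equiv.Perm.sign_swap hij, hsv]
            simp
          rcases hxU with ((h | h) | h) | h
          · left
            refine ⟨hxT, (u⁻¹ * (v * x))⁻¹, ?_, ?_⟩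
            · rw [isSwap_inv (hT _ (mem_Nbr.1 h))]
              exact mem_Nbr.1 h
            · group
          · exfalso
            have hSign := sign_of_memN hT (mem_Nbr.1 h)
            rw [hsx, map_mul, Equiv.Perm.sign_swap hsp, mul_neg_one, neg_neg] at hSign
            exact units_contra hSign.symm
          · right
            refine ⟨hxT, ((u * Equiv.swap s p * Equiv.swap p t)⁻¹ * (v * x))⁻¹, ?_, ?_⟩
            · rw [isSwap_inv (hT _ (mem_Nbr.1 h))]
              exact mem_Nbr.1 h
            · group
          · exfalso
            have hSign := sign_of_memN hT (mem_Nbr.1 h)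
            rw [hsx, map_mul, Equiv.Perm.sign_swap hst, mul_neg_one, neg_neg] at hSign
            exact units_contra hSign.symm
        refine le_trans (Set.ncard_le_ncard hsub ?_) (mcl hT hsp hpt hst ?_ ?_)
        · exact (factset_finite hT (by
            intro h
            exact hvu (by rw [← mul_one v, ← h, mul_inv_cancel_left]))).union
            (factset_finite hT (by
              intro h
              apply hvab
              have : v * ((v⁻¹ * u) * (Equiv.swap s p * Equiv.swap p t)) =
                  u * Equiv.swap s p * Equiv.swap p t := by group
              rw [← this, h, mul_one]))
        · intro h
          exact hvu (by rw [← mul_one v, ← h, mul_inv_cancel_left])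
        · intro h
          apply hvab
          have : v * ((v⁻¹ * u) * (Equiv.swap s p * Equiv.swap p t)) =
              u * Equiv.swap s p * Equiv.swap p t := by group
          rw [← this, h, mul_one]
      · -- opposite sign : neighbours in F lie in N2 ∪ N4
        have hkey : (v⁻¹ * (u * Equiv.swap s t)) * (Equiv.swap s p * Equiv.swap p t) =
            v⁻¹ * (u * Equiv.swap s p) := by
          have h1 : (v⁻¹ * (u * Equiv.swap s t)) * (Equiv.swap s p * Equiv.swap p t) =
              (v⁻¹ * u) * (Equiv.swap s t * (Equiv.swap s p * Equiv.swap p t)) := by group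
          rw [h1, theta_id3 hsp hpt hst]
          group
        have hsub : B ⊆ FactSet T (v⁻¹ * (u * Equiv.swap s t)) ∪
            FactSet T ((v⁻¹ * (u * Equiv.swap s t)) * (Equiv.swap s p * Equiv.swap p t)) := by
          rintro x ⟨hxT, hxF⟩
          rw [hFst, Fset_eq hT] at hxF
          have hxU := hxF.1
          have hsx : Equiv.Perm.sign (v * x) = Equiv.Perm.sign u := by
            obtain ⟨i, j, hij, hxs⟩ := hT x hxT
            rw [map_mul, hxs, Equiv.Perm.sign_swap hij, hsv]
            simp
          rcases hxU with ((h | h) | h) | h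
          · exfalso
            have := sign_of_memN hT (mem_Nbr.1 h)
            rw [hsx] at this
            exact units_contra this
          · right
            rw [hkey]
            refine ⟨hxT, ((u * Equiv.swap s p)⁻¹ * (v * x))⁻¹, ?_, ?_⟩
            · rw [isSwap_inv (hT _ (mem_Nbr.1 h))]
              exact mem_Nbr.1 h
            · group
          · exfalso
            have := sign_of_memN hT (mem_Nbr.1 h)
            rw [hsx, map_mul, map_mul, Equiv.Perm.sign_swap hsp, Equiv.Perm.sign_swap hpt,
              mul_neg_one, mul_neg_one, neg_neg] at this
            exact units_contra this
          · left
            refine ⟨hxT, ((u * Equiv.swap s t)⁻¹ * (v * x))⁻¹, ?_, ?_⟩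
            · rw [isSwap_inv (hT _ (mem_Nbr.1 h))]
              exact mem_Nbr.1 h
            · group
        have hne1 : v⁻¹ * (u * Equiv.swap s t) ≠ 1 := by
          intro h
          exact hvc (by rw [← mul_one v, ← h, mul_inv_cancel_left])
        have hne2 : (v⁻¹ * (u * Equiv.swap s t)) * (Equiv.swap s p * Equiv.swap p t) ≠ 1 := by
          rw [hkey]
          intro h
          exact hva (by rw [← mul_one v, ← h, mul_inv_cancel_left])
        refine le_trans (Set.ncard_le_ncard hsub ?_) (mcl hT hsp hpt hst hne1 hne2)
        exact (factset_finite hT hne1).union (factset_finite hT hne2)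
    have hBT : B ⊆ T := fun x hx => hx.1
    have hTB : 2 ≤ (T \ B).ncard := by
      rw [Set.ncard_diff hBT (Set.toFinite _)]
      omega
    obtain ⟨x1, x2, hx1, hx2, h12⟩ := (Set.one_lt_ncard_iff (Set.toFinite _)).1 (by omega : 1 < (T \ B).ncard)
    refine key (v * x1) (v * x2) (mul_ne_helper h12) ?_ ?_ ?_ ?_
    · exact fun h => hx1.2 ⟨hx1.1, h⟩
    · exact fun h => hx2.2 ⟨hx2.1, h⟩
    · rw [cay_adj hT, inv_mul_cancel_left]; exact hx1.1
    · rw [cay_adj hT, inv_mul_cancel_left]; exact hx2.1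

lemma disconnected (hT : ∀ t ∈ T, t.IsSwap) (haT : Equiv.swap s p ∈ T)
    (hbT : Equiv.swap p t ∈ T) (hcT : Equiv.swap s t ∈ T)
    (hcard : (Cst u s p t).ncard +
      {w : Perm (Fin n) | w ∉ Cst u s p t ∧ ∃ x ∈ Cst u s p t, (cayley T).Adj x w}.ncard <
      Fintype.card (Perm (Fin n))) :
    ¬ ((cayley T).induce
      ({w : Perm (Fin n) | w ∉ Cst u s p t ∧ ∃ x ∈ Cst u s p t, (cayley T).Adj x w}ᶜ :
        Set (Perm (Fin n)))).Connected := by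
  classical
  set Fst : Set (Perm (Fin n)) :=
    {w : Perm (Fin n) | w ∉ Cst u s p t ∧ ∃ x ∈ Cst u s p t, (cayley T).Adj x w} with hFst
  intro hconn
  -- there is a vertex outside C ∪ F
  have hz : ∃ z : Perm (Fin n), z ∉ Cst u s p t ∧ z ∉ Fst := by
    by_contra hno
    push_neg at hno
    have huniv : (Set.univ : Set (Perm (Fin n))) ⊆ Cst u s p t ∪ Fst := by
      intro z _
      by_cases hzC : z ∈ Cst u s p t
      · exact Or.inl hzC
      · exact Or.inr (hno z hzC)
    have h1 : (Set.univ : Set (Perm (Fin n))).ncard ≤ (Cst u s p t ∪ Fst).ncard :=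
      Set.ncard_le_ncard huniv (Set.toFinite _)
    have h2 : (Cst u s p t ∪ Fst).ncard ≤ (Cst u s p t).ncard + Fst.ncard :=
      Set.ncard_union_le _ _
    rw [Set.ncard_univ, Nat.card_eq_fintype_card] at h1
    omega
  obtain ⟨z, hzC, hzF⟩ := hz
  have huF : u ∉ Fst := fun h => h.1 (Or.inl rfl)
  have hreach := hconn.preconnected ⟨u, huF⟩ ⟨z, hzF⟩
  have hclosed : ∀ (x y : (Fstᶜ : Set (Perm (Fin n)))),
      ((cayley T).induce (Fstᶜ : Set (Perm (Fin n)))).Reachable x y →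
      x.1 ∈ Cst u s p t → y.1 ∈ Cst u s p t := by
    intro x y hr
    obtain ⟨w⟩ := hr
    induction w with
    | nil => exact id
    | @cons a b c hadj w ih =>
      intro hx
      apply ih
      have hadj' : (cayley T).Adj a.1 b.1 := hadj
      by_contra hbC
      have hb : b.1 ∈ Fst := ⟨hbC, a.1, hx, hadj'⟩
      exact b.2 hb
  exact hzC (hclosed ⟨u, huF⟩ ⟨z, hzF⟩ hreach (Or.inl rfl))

lemma m_ge_seven {n k : ℕ} (hn : 5 ≤ n) (hk2 : 2 ≤ k) (hkn : k + 1 ≤ n) :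
    7 ≤ k * (k + 1) / 2 + (n - (k + 1)) * k := by
  rcases Nat.lt_or_ge k 3 with hk | hk
  · have hk' : k = 2 := by omega
    subst hk'
    omega
  · rcases Nat.lt_or_ge k 4 with hk4 | hk4
    · have hk' : k = 3 := by omega
      subst hk'
      omega
    · have h20 : 20 ≤ k * (k + 1) := by nlinarith
      have : 10 ≤ k * (k + 1) / 2 := by omega
      exact le_trans (by omega) (Nat.le_add_right _ _)

lemma m_le_max {n k : ℕ} (hkn : k + 1 ≤ n) :
    2 * (k * (k + 1) / 2 + (n - (k + 1)) * k) ≤ n * (n - 1) := by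
  have heven : k * (k + 1) % 2 = 0 := Nat.even_iff.mp (Nat.even_mul_succ_self k)
  set r : ℕ := n - (k + 1) with hr
  have hn' : n = k + 1 + r := by omega
  have key : 2 * (k * (k + 1) / 2 + r * k) = k * (k + 1) + 2 * (r * k) := by omega
  rw [key, hn']
  have hexp : (k + 1 + r) * (k + 1 + r - 1) = (k + 1 + r) * (k + r) := by
    congr 1
    omega
  rw [hexp]
  nlinarith

lemma two_mul_lt_factorial {n : ℕ} (hn : 5 ≤ n) : 2 * (n * (n - 1)) < n.factorial := by
  induction n with
  | zero => omega
  | succ m ih =>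
    rcases Nat.lt_or_ge m 5 with hm | hm
    · have : m = 4 := by omega
      subst this
      decide
    · have ihm := ih (by omega)
      rw [Nat.factorial_succ]
      have h1 : 2 * ((m + 1) * (m + 1 - 1)) = (m + 1) * (2 * m) := by
        rw [Nat.add_sub_cancel]; ring
      rw [h1]
      have h3 : 4 ≤ m - 1 := by omega
      have h4 : m * 4 ≤ m * (m - 1) := Nat.mul_le_mul_left m h3
      have h2 : 2 * m ≤ 2 * (m * (m - 1)) := by linarith
      calc (m + 1) * (2 * m) ≤ (m + 1) * (2 * (m * (m - 1))) :=
            Nat.mul_le_mul_left _ h2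
        _ < (m + 1) * m.factorial := mul_lt_mul_of_pos_left ihm (by omega)

lemma transAdj {i j : Fin n} (h : (transGraph T).Adj i j) : i ≠ j ∧ Equiv.swap i j ∈ T := by
  rw [transGraph, SimpleGraph.fromRel_adj] at h
  refine ⟨h.1, ?_⟩
  rcases h.2 with h' | h'
  · exact h'
  · rwa [Equiv.swap_comm]

end main

end St13


/-- For `n ≥ 5`, `2 ≤ k ≤ n-1`, a triangle `s p t` in the `k`-tree `G(𝒯)` and a vertex
`u` of `T_kG_n`, the neighborhood `F = N(C)` of the Type B 4-cycle `C` with vertex set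
`{u, u(sp), u(sp)(pt), u(st)}` has cardinality exactly `4(kn - k(k+1)/2) - 10`, and `F`
is an `R_2`-vertex-cut of `T_kG_n`. -/
theorem stmt13 (n k : ℕ) (hn : 5 ≤ n) (hk2 : 2 ≤ k) (hkn : k ≤ n - 1)
    (T : Set (Equiv.Perm (Fin n))) (hT : ∀ t ∈ T, Equiv.Perm.IsSwap t)
    (hkt : IsKTree k (transGraph T))
    (s p t : Fin n)
    (hsp : (transGraph T).Adj s p) (hpt : (transGraph T).Adj p t)
    (hst : (transGraph T).Adj s t)
    (u : Equiv.Perm (Fin n)) :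
    {w : Equiv.Perm (Fin n) |
        w ∉ ({u, u * Equiv.swap s p, u * Equiv.swap s p * Equiv.swap p t,
              u * Equiv.swap s t} : Set (Equiv.Perm (Fin n))) ∧
        ∃ x ∈ ({u, u * Equiv.swap s p, u * Equiv.swap s p * Equiv.swap p t,
              u * Equiv.swap s t} : Set (Equiv.Perm (Fin n))),
          (cayley T).Adj x w}.ncard = 4 * (k * n - k * (k + 1) / 2) - 10 ∧
    IsRkCut (cayley T) 2
      {w : Equiv.Perm (Fin n) |
        w ∉ ({u, u * Equiv.swap s p, u * Equiv.swap s p * Equiv.swap p t,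
              u * Equiv.swap s t} : Set (Equiv.Perm (Fin n))) ∧
        ∃ x ∈ ({u, u * Equiv.swap s p, u * Equiv.swap s p * Equiv.swap p t,
              u * Equiv.swap s t} : Set (Equiv.Perm (Fin n))),
          (cayley T).Adj x w} := by
  obtain ⟨hsp', haT⟩ := St13.transAdj hsp
  obtain ⟨hpt', hbT⟩ := St13.transAdj hpt
  obtain ⟨hst', hcT⟩ := St13.transAdj hst
  have hkn1 : k + 1 ≤ n := by omega
  have hm_eq : T.ncard = k * (k + 1) / 2 + (n - (k + 1)) * k := St13.Tcard_of_ktree hT hkt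
  have hm7 : 7 ≤ T.ncard := hm_eq ▸ St13.m_ge_seven hn hk2 hkn1
  have hFcard : {w : Equiv.Perm (Fin n) |
      w ∉ St13.Cst u s p t ∧ ∃ x ∈ St13.Cst u s p t, (cayley T).Adj x w}.ncard =
      4 * T.ncard - 10 :=
    St13.F_ncard hT hsp' hpt' hst' haT hbT hcT hm7
  have harith : k * n - k * (k + 1) / 2 = T.ncard := by
    have heven : k * (k + 1) % 2 = 0 := Nat.even_iff.mp (Nat.even_mul_succ_self k)
    have hsub : (n - (k + 1)) * k = k * n - k * (k + 1) := by
      rw [Nat.sub_mul, Nat.mul_comm n k, Nat.mul_comm (k + 1) k]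
    have hAB : k * (k + 1) ≤ k * n := Nat.mul_le_mul_left k hkn1
    rw [hm_eq, hsub]
    set A := k * n with hA
    set B := k * (k + 1) with hBdef
    omega
  constructor
  · show {w : Equiv.Perm (Fin n) |
        w ∉ St13.Cst u s p t ∧ ∃ x ∈ St13.Cst u s p t, (cayley T).Adj x w}.ncard = _
    rw [hFcard, harith]
  · constructor
    · have hcard : (St13.Cst u s p t).ncard +
          {w : Equiv.Perm (Fin n) |
            w ∉ St13.Cst u s p t ∧ ∃ x ∈ St13.Cst u s p t, (cayley T).Adj x w}.ncard <
          Fintype.card (Equiv.Perm (Fin n)) := by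
        rw [St13.C_ncard hsp' hpt' hst', hFcard, Fintype.card_perm, Fintype.card_fin]
        have h1 : 2 * T.ncard ≤ n * (n - 1) := by
          rw [hm_eq]
          exact St13.m_le_max hkn1
        have h2 : 2 * (n * (n - 1)) < n.factorial := St13.two_mul_lt_factorial hn
        omega
      exact St13.disconnected hT haT hbT hcT hcard
    · intro v hv
      exact St13.deg_ge_two hT hsp' hpt' hst' haT hbT hcT hm7 v hv
end
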